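/- arXiv:2512.12525 — 4 statements merged into one kernel-verified Lean document; each statement's English description precedes it below -/
import Mathlib

section
/- For any sufficiently smooth pair (Φ, A) with Φ: ℝ^{d+1} → ℂ and A = (A_0, A_1, …, A_d): ℝ^{d+1} → ℝ^{d+1}, defining D_α = ∂_α − i A_α, F_{αβ} = ∂_α A_β − ∂_β A_α, (v,w) = Re(v conj(w)), and the operators S_φ[U] = (κ_0 D_0 + ε κ_1) D_0 Φ − Σ_{k=1}^d D_k D_k Φ + (1/2)(|Φ|²−1)Φ, S_j[U] = (κ_0 ∂_0 + ε κ_1) F_{0j} − Σ_k ∂_k F_{kj} − (iΦ, D_j Φ) for j = 1,…,d, and S_0[U] = −Σ_k ∂_k F_{k0} − (iΦ, D_0 Φ), the algebraic identity (S_φ[U], iΦ) = −(κ_0 ∂_0 + ε κ_1) S_0[U] + Σ_{j=1}^d ∂_j S_j[U] holds pointwise, without assuming (Φ, A) solves any equation. -/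
noncomputable section

/-- Spacetime `ℝ^{d+1}`: coordinate `0` is time, coordinate `k.succ` (`k : Fin d`) is
the `k`-th spatial direction. -/
abbrev SpaceTime (d : ℕ) := EuclideanSpace ℝ (Fin (d + 1))

/-- Partial derivative `∂_α` of a complex-valued function. -/
def pdC {d : ℕ} (α : Fin (d + 1)) (f : SpaceTime d → ℂ) (x : SpaceTime d) : ℂ :=
  fderiv ℝ f x (EuclideanSpace.single α 1)

/-- Partial derivative `∂_α` of a real-valued function. -/
def pdR {d : ℕ} (α : Fin (d + 1)) (f : SpaceTime d → ℝ) (x : SpaceTime d) : ℝ :=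
  fderiv ℝ f x (EuclideanSpace.single α 1)

/-- The real inner product `(v,w) = Re (v * conj w)` on `ℂ`. -/
def rip (v w : ℂ) : ℝ := (v * (starRingEnd ℂ) w).re

/-- Covariant derivative `D_α f = ∂_α f - i A_α f`. -/
def Dcov {d : ℕ} (A : Fin (d + 1) → SpaceTime d → ℝ) (α : Fin (d + 1))
    (f : SpaceTime d → ℂ) : SpaceTime d → ℂ :=
  fun x => pdC α f x - Complex.I * (A α x) * f x

/-- Curvature `F_{αβ} = ∂_α A_β - ∂_β A_α`. -/
def curv {d : ℕ} (A : Fin (d + 1) → SpaceTime d → ℝ) (α β : Fin (d + 1)) :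
    SpaceTime d → ℝ :=
  fun x => pdR α (A β) x - pdR β (A α) x

namespace AH

open Complex Finset

variable {d : ℕ}

lemma two_le : minSmoothness ℝ 2 ≤ ((⊤:ℕ∞) : WithTop ℕ∞) := by
  rw [minSmoothness_of_isRCLikeNormedField]; norm_cast
lemma one_le : ((⊤:ℕ∞) : WithTop ℕ∞) ≠ 0 := by simp
lemma add_one_le : ((⊤:ℕ∞) : WithTop ℕ∞) + 1 ≤ ((⊤:ℕ∞) : WithTop ℕ∞) := by norm_cast

-- smoothness of partial derivatives
lemma contDiff_pdC {f : SpaceTime d → ℂ} (hf : ContDiff ℝ (⊤:ℕ∞) f) (α : Fin (d+1)) :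
    ContDiff ℝ (⊤:ℕ∞) (pdC α f) := by
  have h1 : ContDiff ℝ (⊤:ℕ∞) (fderiv ℝ f) := hf.fderiv_right add_one_le
  exact (ContinuousLinearMap.apply ℝ ℂ (EuclideanSpace.single α 1)).contDiff.comp h1

lemma contDiff_pdR {f : SpaceTime d → ℝ} (hf : ContDiff ℝ (⊤:ℕ∞) f) (α : Fin (d+1)) :
    ContDiff ℝ (⊤:ℕ∞) (pdR α f) := by
  have h1 : ContDiff ℝ (⊤:ℕ∞) (fderiv ℝ f) := hf.fderiv_right add_one_le
  exact (ContinuousLinearMap.apply ℝ ℝ (EuclideanSpace.single α 1)).contDiff.comp h1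

-- linearity lemmas
lemma pdR_neg (α : Fin (d+1)) (f : SpaceTime d → ℝ) (x : SpaceTime d) :
    pdR α (fun y => -f y) x = -pdR α f x := by
  simp [pdR, fderiv_neg]

lemma pdR_sub (α : Fin (d+1)) {f g : SpaceTime d → ℝ} {x : SpaceTime d}
    (hf : DifferentiableAt ℝ f x) (hg : DifferentiableAt ℝ g x) :
    pdR α (fun y => f y - g y) x = pdR α f x - pdR α g x := by
  simp [pdR, fderiv_fun_sub hf hg]

lemma pdR_add (α : Fin (d+1)) {f g : SpaceTime d → ℝ} {x : SpaceTime d}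
    (hf : DifferentiableAt ℝ f x) (hg : DifferentiableAt ℝ g x) :
    pdR α (fun y => f y + g y) x = pdR α f x + pdR α g x := by
  simp [pdR, fderiv_fun_add hf hg]

lemma pdR_const_mul (α : Fin (d+1)) (c : ℝ) {f : SpaceTime d → ℝ} {x : SpaceTime d}
    (hf : DifferentiableAt ℝ f x) :
    pdR α (fun y => c * f y) x = c * pdR α f x := by
  simp [pdR, fderiv_const_mul hf c]

lemma pdR_sum (α : Fin (d+1)) {ι : Type*} (s : Finset ι) {f : ι → SpaceTime d → ℝ}
    {x : SpaceTime d} (hf : ∀ i ∈ s, DifferentiableAt ℝ (f i) x) :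
    pdR α (fun y => ∑ i ∈ s, f i y) x = ∑ i ∈ s, pdR α (f i) x := by
  simp [pdR, fderiv_fun_sum hf]

lemma pdC_const_mul (α : Fin (d+1)) (c : ℂ) {f : SpaceTime d → ℂ} {x : SpaceTime d}
    (hf : DifferentiableAt ℝ f x) :
    pdC α (fun y => c * f y) x = c * pdC α f x := by
  simp [pdC, fderiv_const_mul hf c]

-- Clairaut
lemma pdR_comm {f : SpaceTime d → ℝ} (hf : ContDiff ℝ (⊤:ℕ∞) f) (α β : Fin (d+1))
    (x : SpaceTime d) : pdR α (pdR β f) x = pdR β (pdR α f) x := by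
  have h1 : ContDiff ℝ (⊤:ℕ∞) (fderiv ℝ f) := hf.fderiv_right add_one_le
  have key : ∀ v w : SpaceTime d, fderiv ℝ (fun y => fderiv ℝ f y w) x v
      = fderiv ℝ (fderiv ℝ f) x v w := by
    intro v w
    have h2 : HasFDerivAt (fun y => (ContinuousLinearMap.apply ℝ ℝ w) (fderiv ℝ f y))
        ((ContinuousLinearMap.apply ℝ ℝ w).comp (fderiv ℝ (fderiv ℝ f) x)) x :=
      (ContinuousLinearMap.apply ℝ ℝ w).hasFDerivAt.comp x
        ((h1.differentiable one_le) x).hasFDerivAt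
    have := h2.fderiv
    simp only [ContinuousLinearMap.apply_apply] at this
    rw [this]
    rfl
  have hsymm : IsSymmSndFDerivAt ℝ f x := hf.contDiffAt.isSymmSndFDerivAt two_le
  show fderiv ℝ (fun y => fderiv ℝ f y (EuclideanSpace.single β 1)) x (EuclideanSpace.single α 1)
      = fderiv ℝ (fun y => fderiv ℝ f y (EuclideanSpace.single α 1)) x (EuclideanSpace.single β 1)
  rw [key, key]
  exact hsymm _ _



-- rip algebra
lemma rip_eq (v w : ℂ) : rip v w = v.re * w.re + v.im * w.im := by
  simp [rip, Complex.mul_re]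

lemma rip_comm (v w : ℂ) : rip v w = rip w v := by simp [rip_eq]; ring

lemma rip_add_left (u v w : ℂ) : rip (u + v) w = rip u w + rip v w := by
  simp [rip_eq]; ring

lemma rip_sub_left (u v w : ℂ) : rip (u - v) w = rip u w - rip v w := by
  simp [rip_eq]; ring

lemma rip_real_mul (s : ℝ) (v w : ℂ) : rip ((s : ℂ) * v) w = s * rip v w := by
  simp [rip_eq]; ring

lemma rip_self_I (v : ℂ) : rip v (Complex.I * v) = 0 := by
  simp [rip_eq]; ring

lemma rip_sum_left {ι : Type*} (s : Finset ι) (v : ι → ℂ) (w : ℂ) :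
    rip (∑ i ∈ s, v i) w = ∑ i ∈ s, rip (v i) w := by
  simp [rip_eq, Finset.sum_mul, Complex.re_sum, Complex.im_sum, Finset.sum_add_distrib]

lemma rip_alg (u Du P : ℂ) (a : ℝ) :
    rip (Complex.I * (Du + Complex.I * a * u)) Du + rip (Complex.I * u) P
      = rip (P - Complex.I * (a : ℂ) * Du) (Complex.I * u) := by
  simp [rip_eq, Complex.add_re, Complex.add_im, Complex.sub_re, Complex.sub_im]; ring

-- Leibniz rule for rip
lemma pdR_re (α : Fin (d+1)) {f : SpaceTime d → ℂ} {x : SpaceTime d}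
    (hf : DifferentiableAt ℝ f x) :
    pdR α (fun y => (f y).re) x = (pdC α f x).re := by
  have h := (Complex.reCLM.hasFDerivAt.comp x hf.hasFDerivAt).fderiv
  simp only [Function.comp_def, Complex.reCLM_apply] at h
  simp only [pdR, pdC, h]; rfl

lemma pdR_im (α : Fin (d+1)) {f : SpaceTime d → ℂ} {x : SpaceTime d}
    (hf : DifferentiableAt ℝ f x) :
    pdR α (fun y => (f y).im) x = (pdC α f x).im := by
  have h := (Complex.imCLM.hasFDerivAt.comp x hf.hasFDerivAt).fderiv
  simp only [Function.comp_def, Complex.imCLM_apply] at h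
  simp only [pdR, pdC, h]; rfl

lemma pdR_mul (α : Fin (d+1)) {f g : SpaceTime d → ℝ} {x : SpaceTime d}
    (hf : DifferentiableAt ℝ f x) (hg : DifferentiableAt ℝ g x) :
    pdR α (fun y => f y * g y) x = pdR α f x * g x + f x * pdR α g x := by
  simp only [pdR, fderiv_fun_mul hf hg]
  simp [smul_eq_mul]; ring

lemma pdR_rip (α : Fin (d+1)) {f g : SpaceTime d → ℂ} {x : SpaceTime d}
    (hf : Differentiable ℝ f) (hg : Differentiable ℝ g) :
    pdR α (fun y => rip (f y) (g y)) x = rip (pdC α f x) (g x) + rip (f x) (pdC α g x) := by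
  have hre : ∀ h : SpaceTime d → ℂ, Differentiable ℝ h →
      DifferentiableAt ℝ (fun y => (h y).re) x := fun h hh =>
    (Complex.reCLM.differentiable.comp hh) x
  have him : ∀ h : SpaceTime d → ℂ, Differentiable ℝ h →
      DifferentiableAt ℝ (fun y => (h y).im) x := fun h hh =>
    (Complex.imCLM.differentiable.comp hh) x
  have e1 : (fun y => rip (f y) (g y))
      = fun y => (f y).re * (g y).re + (f y).im * (g y).im := by
    funext y; rw [rip_eq]
  rw [e1, pdR_add α (((hre f hf).fun_mul (hre g hg))) (((him f hf).fun_mul (him g hg))),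
    pdR_mul α (hre f hf) (hre g hg), pdR_mul α (him f hf) (him g hg),
    pdR_re α (hf x), pdR_re α (hg x), pdR_im α (hf x), pdR_im α (hg x),
    rip_eq, rip_eq]
  ring

-- smoothness of compounds
lemma contDiff_Dcov {Φ : SpaceTime d → ℂ} {A : Fin (d+1) → SpaceTime d → ℝ}
    (hΦ : ContDiff ℝ (⊤:ℕ∞) Φ) (hA : ∀ β, ContDiff ℝ (⊤:ℕ∞) (A β)) (α : Fin (d+1)) :
    ContDiff ℝ (⊤:ℕ∞) (Dcov A α Φ) := by
  unfold Dcov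
  exact (contDiff_pdC hΦ α).sub
    ((contDiff_const.mul (Complex.ofRealCLM.contDiff.comp (hA α))).mul hΦ)

lemma contDiff_curv {A : Fin (d+1) → SpaceTime d → ℝ}
    (hA : ∀ β, ContDiff ℝ (⊤:ℕ∞) (A β)) (α β : Fin (d+1)) :
    ContDiff ℝ (⊤:ℕ∞) (curv A α β) := by
  unfold curv
  exact (contDiff_pdR (hA β) α).sub (contDiff_pdR (hA α) β)

lemma contDiff_rip_comp {f g : SpaceTime d → ℂ}
    (hf : ContDiff ℝ (⊤:ℕ∞) f) (hg : ContDiff ℝ (⊤:ℕ∞) g) :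
    ContDiff ℝ (⊤:ℕ∞) (fun x => rip (f x) (g x)) := by
  have e1 : (fun x => rip (f x) (g x))
      = fun x => (f x).re * (g x).re + (f x).im * (g x).im := by
    funext y; rw [rip_eq]
  rw [e1]
  exact ((Complex.reCLM.contDiff.comp hf).mul (Complex.reCLM.contDiff.comp hg)).add
    ((Complex.imCLM.contDiff.comp hf).mul (Complex.imCLM.contDiff.comp hg))

-- the key current-divergence lemma
lemma pdR_current {Φ : SpaceTime d → ℂ} {A : Fin (d+1) → SpaceTime d → ℝ}
    (hΦ : ContDiff ℝ (⊤:ℕ∞) Φ) (hA : ∀ β, ContDiff ℝ (⊤:ℕ∞) (A β)) (α : Fin (d+1))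
    (x : SpaceTime d) :
    pdR α (fun y => rip (Complex.I * Φ y) (Dcov A α Φ y)) x
      = rip (Dcov A α (Dcov A α Φ) x) (Complex.I * Φ x) := by
  have hD := contDiff_Dcov hΦ hA α
  rw [pdR_rip α ((contDiff_const.mul hΦ).differentiable one_le) (hD.differentiable one_le)]
  rw [pdC_const_mul α Complex.I ((hΦ.differentiable one_le) x)]
  have h1 : pdC α Φ x = Dcov A α Φ x + Complex.I * (A α x) * Φ x := by
    simp [Dcov]
  have h2 : Dcov A α (Dcov A α Φ) x
      = pdC α (Dcov A α Φ) x - Complex.I * (A α x) * Dcov A α Φ x := rfl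
  rw [h1, h2]
  exact rip_alg (Φ x) (Dcov A α Φ x) (pdC α (Dcov A α Φ) x) (A α x)

end AH

open AH

/-- `S_φ[U] = (κ₀ D₀ + ε κ₁) D₀ Φ − Σ_{k=1}^d D_k D_k Φ + (1/2)(|Φ|²−1)Φ`. -/
def Sphi {d : ℕ} (κ₀ κ₁ ε : ℝ) (Φ : SpaceTime d → ℂ)
    (A : Fin (d + 1) → SpaceTime d → ℝ) : SpaceTime d → ℂ :=
  fun x =>
    (κ₀ : ℂ) * Dcov A 0 (Dcov A 0 Φ) x + ((ε * κ₁ : ℝ) : ℂ) * Dcov A 0 Φ x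
      - ∑ k : Fin d, Dcov A k.succ (Dcov A k.succ Φ) x
      + (1 / 2 : ℂ) * ((Complex.normSq (Φ x) : ℂ) - 1) * Φ x

/-- `S_j[U] = (κ₀ ∂₀ + ε κ₁) F_{0j} − Σ_k ∂_k F_{kj} − (iΦ, D_j Φ)`, `j = 1,…,d`. -/
def Sj {d : ℕ} (κ₀ κ₁ ε : ℝ) (Φ : SpaceTime d → ℂ)
    (A : Fin (d + 1) → SpaceTime d → ℝ) (j : Fin d) : SpaceTime d → ℝ :=
  fun x =>
    κ₀ * pdR 0 (curv A 0 j.succ) x + ε * κ₁ * curv A 0 j.succ x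
      - ∑ k : Fin d, pdR k.succ (curv A k.succ j.succ) x
      - rip (Complex.I * Φ x) (Dcov A j.succ Φ x)

/-- `S_0[U] = −Σ_k ∂_k F_{k0} − (iΦ, D_0 Φ)`. -/
def Szero {d : ℕ} (Φ : SpaceTime d → ℂ)
    (A : Fin (d + 1) → SpaceTime d → ℝ) : SpaceTime d → ℝ :=
  fun x =>
    -(∑ k : Fin d, pdR k.succ (curv A k.succ 0) x)
      - rip (Complex.I * Φ x) (Dcov A 0 Φ x)

/-- The algebraic identity `(S_φ[U], iΦ) = −(κ₀∂₀ + εκ₁) S₀[U] + Σ_{j=1}^d ∂_j S_j[U]`,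
valid pointwise for any sufficiently smooth pair `(Φ, A)`. -/
theorem abelianHiggs_divergence_identity
    {d : ℕ} (hd : 1 ≤ d) (κ₀ κ₁ ε : ℝ) (hκ₀ : 0 ≤ κ₀) (hκ₁ : 0 ≤ κ₁) (hε : 0 < ε)
    (Φ : SpaceTime d → ℂ) (A : Fin (d + 1) → SpaceTime d → ℝ)
    (hΦ : ContDiff ℝ (⊤ : ℕ∞) Φ) (hA : ∀ α, ContDiff ℝ (⊤ : ℕ∞) (A α))
    (x : SpaceTime d) :
    rip (Sphi κ₀ κ₁ ε Φ A x) (Complex.I * Φ x)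
      = -(κ₀ * pdR 0 (Szero Φ A) x + ε * κ₁ * Szero Φ A x)
        + ∑ j : Fin d, pdR j.succ (Sj κ₀ κ₁ ε Φ A j) x := by
  have hcv : ∀ α β : Fin (d+1), ContDiff ℝ (⊤:ℕ∞) (curv A α β) := fun α β =>
    AH.contDiff_curv hA α β
  have hpcvAt : ∀ γ α β : Fin (d+1), DifferentiableAt ℝ (pdR γ (curv A α β)) x :=
    fun γ α β => ((AH.contDiff_pdR (hcv α β) γ).differentiable AH.one_le) x
  have hjfc : ∀ α : Fin (d+1),
      ContDiff ℝ (⊤:ℕ∞) (fun y => rip (Complex.I * Φ y) (Dcov A α Φ y)) := fun α =>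
    AH.contDiff_rip_comp (contDiff_const.mul hΦ) (AH.contDiff_Dcov hΦ hA α)
  -- potential term vanishes
  have hpot : rip ((1 / 2 : ℂ) * ((Complex.normSq (Φ x) : ℂ) - 1) * Φ x)
      (Complex.I * Φ x) = 0 := by
    have e : (1 / 2 : ℂ) * ((Complex.normSq (Φ x) : ℂ) - 1)
        = ((1 / 2 * (Complex.normSq (Φ x) - 1) : ℝ) : ℂ) := by push_cast; ring
    rw [e, AH.rip_real_mul, AH.rip_self_I, mul_zero]
  -- LHS expansion
  have hL : rip (Sphi κ₀ κ₁ ε Φ A x) (Complex.I * Φ x)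
      = κ₀ * rip (Dcov A 0 (Dcov A 0 Φ) x) (Complex.I * Φ x)
        + ε * κ₁ * rip (Dcov A 0 Φ x) (Complex.I * Φ x)
        - ∑ k : Fin d, rip (Dcov A k.succ (Dcov A k.succ Φ) x) (Complex.I * Φ x) := by
    unfold Sphi
    rw [AH.rip_add_left, AH.rip_sub_left, AH.rip_add_left, AH.rip_real_mul,
      AH.rip_real_mul, AH.rip_sum_left, hpot]
    ring
  -- S0 derivative
  have hS0 : pdR 0 (Szero Φ A) x
      = -(∑ k : Fin d, pdR 0 (pdR k.succ (curv A k.succ 0)) x)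
        - rip (Dcov A 0 (Dcov A 0 Φ) x) (Complex.I * Φ x) := by
    unfold Szero
    rw [AH.pdR_sub 0
      (((ContDiff.sum (fun k _ => AH.contDiff_pdR (hcv k.succ 0) k.succ)).neg.differentiable
        AH.one_le) x)
      (((hjfc 0).differentiable AH.one_le) x)]
    rw [AH.pdR_neg, AH.pdR_sum 0 Finset.univ (fun k _ => hpcvAt k.succ k.succ 0),
      AH.pdR_current hΦ hA 0 x]
  -- Sj derivatives
  have hSj : ∀ j : Fin d, pdR j.succ (Sj κ₀ κ₁ ε Φ A j) x
      = κ₀ * pdR j.succ (pdR 0 (curv A 0 j.succ)) x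
        + ε * κ₁ * pdR j.succ (curv A 0 j.succ) x
        - ∑ k : Fin d, pdR j.succ (pdR k.succ (curv A k.succ j.succ)) x
        - rip (Dcov A j.succ (Dcov A j.succ Φ) x) (Complex.I * Φ x) := by
    intro j
    unfold Sj
    rw [AH.pdR_sub j.succ
      ((((contDiff_const.mul (AH.contDiff_pdR (hcv 0 j.succ) 0)).add
          (contDiff_const.mul (hcv 0 j.succ))).sub
        (ContDiff.sum (fun k _ => AH.contDiff_pdR (hcv k.succ j.succ) k.succ))).differentiable
          AH.one_le x)
      (((hjfc j.succ).differentiable AH.one_le) x)]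
    rw [AH.pdR_sub j.succ
      (((contDiff_const.mul (AH.contDiff_pdR (hcv 0 j.succ) 0)).add
          (contDiff_const.mul (hcv 0 j.succ))).differentiable AH.one_le x)
      ((ContDiff.sum (fun k _ => AH.contDiff_pdR (hcv k.succ j.succ) k.succ)).differentiable
        AH.one_le x)]
    rw [AH.pdR_add j.succ
      ((contDiff_const.mul (AH.contDiff_pdR (hcv 0 j.succ) 0)).differentiable AH.one_le x)
      ((contDiff_const.mul (hcv 0 j.succ)).differentiable AH.one_le x)]
    rw [AH.pdR_const_mul j.succ κ₀ (hpcvAt 0 0 j.succ),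
      AH.pdR_const_mul j.succ (ε * κ₁) ((hcv 0 j.succ).differentiable AH.one_le x),
      AH.pdR_sum j.succ Finset.univ (fun k _ => hpcvAt k.succ k.succ j.succ),
      AH.pdR_current hΦ hA j.succ x]
  -- antisymmetry cancellations
  have hanti : ∀ α β : Fin (d+1), curv A α β = fun y => -(curv A β α y) := by
    intro α β; funext y; simp only [curv]; ring
  have hX1 : ∀ k : Fin d, pdR k.succ (pdR 0 (curv A 0 k.succ)) x
      = -pdR 0 (pdR k.succ (curv A k.succ 0)) x := by
    intro k
    calc pdR k.succ (pdR 0 (curv A 0 k.succ)) x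
        = pdR k.succ (fun y => pdR 0 (fun z => -(curv A k.succ 0 z)) y) x := by
          rw [hanti 0 k.succ]
      _ = pdR k.succ (fun y => -(pdR 0 (curv A k.succ 0) y)) x := by
          congr 1; funext y; exact AH.pdR_neg 0 _ y
      _ = -(pdR k.succ (pdR 0 (curv A k.succ 0)) x) := AH.pdR_neg k.succ _ x
      _ = -pdR 0 (pdR k.succ (curv A k.succ 0)) x := by
          rw [AH.pdR_comm (hcv k.succ 0) k.succ 0 x]
  have hX2 : ∀ k : Fin d, pdR k.succ (curv A 0 k.succ) x
      = -pdR k.succ (curv A k.succ 0) x := by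
    intro k
    calc pdR k.succ (curv A 0 k.succ) x
        = pdR k.succ (fun y => -(curv A k.succ 0 y)) x := by rw [hanti 0 k.succ]
      _ = -pdR k.succ (curv A k.succ 0) x := AH.pdR_neg k.succ _ x
  have hX3 : ∑ j : Fin d, ∑ k : Fin d,
      pdR j.succ (pdR k.succ (curv A k.succ j.succ)) x = 0 := by
    have hg : ∀ j k : Fin d, pdR j.succ (pdR k.succ (curv A k.succ j.succ)) x
        = -(pdR k.succ (pdR j.succ (curv A j.succ k.succ)) x) := by
      intro j k
      calc pdR j.succ (pdR k.succ (curv A k.succ j.succ)) x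
          = pdR k.succ (pdR j.succ (curv A k.succ j.succ)) x :=
            AH.pdR_comm (hcv k.succ j.succ) j.succ k.succ x
        _ = pdR k.succ (fun y => pdR j.succ (fun z => -(curv A j.succ k.succ z)) y) x := by
            rw [hanti k.succ j.succ]
        _ = pdR k.succ (fun y => -(pdR j.succ (curv A j.succ k.succ) y)) x := by
            congr 1; funext y; exact AH.pdR_neg j.succ _ y
        _ = -(pdR k.succ (pdR j.succ (curv A j.succ k.succ)) x) := AH.pdR_neg k.succ _ x
    have h2 : ∑ j : Fin d, ∑ k : Fin d, pdR j.succ (pdR k.succ (curv A k.succ j.succ)) x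
        = -∑ j : Fin d, ∑ k : Fin d, pdR j.succ (pdR k.succ (curv A k.succ j.succ)) x := by
      calc ∑ j : Fin d, ∑ k : Fin d, pdR j.succ (pdR k.succ (curv A k.succ j.succ)) x
          = ∑ j : Fin d, ∑ k : Fin d,
              -(pdR k.succ (pdR j.succ (curv A j.succ k.succ)) x) := by
            exact Finset.sum_congr rfl fun j _ => Finset.sum_congr rfl fun k _ => hg j k
        _ = -∑ j : Fin d, ∑ k : Fin d,
              pdR k.succ (pdR j.succ (curv A j.succ k.succ)) x := by
            simp [Finset.sum_neg_distrib]
        _ = -∑ k : Fin d, ∑ j : Fin d,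
              pdR k.succ (pdR j.succ (curv A j.succ k.succ)) x := by
            rw [Finset.sum_comm]
        _ = -∑ j : Fin d, ∑ k : Fin d,
              pdR j.succ (pdR k.succ (curv A k.succ j.succ)) x := rfl
    linarith
  -- assemble RHS
  have hA1 : ∑ j : Fin d, pdR j.succ (pdR 0 (curv A 0 j.succ)) x
      = -(∑ k : Fin d, pdR 0 (pdR k.succ (curv A k.succ 0)) x) := by
    rw [Finset.sum_congr rfl fun j _ => hX1 j, Finset.sum_neg_distrib]
  have hA2 : ∑ j : Fin d, pdR j.succ (curv A 0 j.succ) x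
      = -(∑ k : Fin d, pdR k.succ (curv A k.succ 0) x) := by
    rw [Finset.sum_congr rfl fun j _ => hX2 j, Finset.sum_neg_distrib]
  have hsum : ∑ j : Fin d, pdR j.succ (Sj κ₀ κ₁ ε Φ A j) x
      = κ₀ * (-(∑ k : Fin d, pdR 0 (pdR k.succ (curv A k.succ 0)) x))
        + ε * κ₁ * (-(∑ k : Fin d, pdR k.succ (curv A k.succ 0) x))
        - 0
        - ∑ j : Fin d, rip (Dcov A j.succ (Dcov A j.succ Φ) x) (Complex.I * Φ x) := by
    rw [Finset.sum_congr rfl fun j _ => hSj j, Finset.sum_sub_distrib,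
      Finset.sum_sub_distrib, Finset.sum_add_distrib, ← Finset.mul_sum, ← Finset.mul_sum,
      hA1, hA2, hX3]
  have hS0v : Szero Φ A x
      = -(∑ k : Fin d, pdR k.succ (curv A k.succ 0) x)
        - rip (Dcov A 0 Φ x) (Complex.I * Φ x) := by
    unfold Szero
    rw [AH.rip_comm]
  rw [hL, hS0, hS0v, hsum]
  ring
end
end

section
/- Let V: ℝ² → [0,∞) be measurable with V(x) ≥ 1/2 for |x| ≥ R for some R > 0. Then there exists c > 0 such that for all f ∈ H¹(ℝ²), c ‖f‖²_{L²(ℝ²)} ≤ ∫_{ℝ²} (|∇f|² + V f²) dx. -/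
open MeasureTheory

noncomputable section

abbrev E2 := EuclideanSpace ℝ (Fin 2)

def e1 : E2 := EuclideanSpace.single 0 1

lemma ptwise (f : E2 → ℝ) (hf : ContDiff ℝ 1 f) (x : E2) (t ε : ℝ) (ht : 0 ≤ t) (hε : 0 < ε) :
    f x ^ 2 ≤ f (x + t • e1) ^ 2 +
      ∫ s in (0:ℝ)..t, (ε * f (x + s • e1) ^ 2 + ε⁻¹ * ‖fderiv ℝ f (x + s • e1)‖ ^ 2) := by
  set D := fderiv ℝ f with hD
  have hline : ∀ s : ℝ, HasDerivAt (fun s : ℝ => x + s • e1) e1 s := by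
    intro s
    have h1 : HasDerivAt (fun s : ℝ => s • e1) ((1:ℝ) • e1) s := (hasDerivAt_id s).smul_const e1
    have h2 := h1.const_add x
    rw [one_smul] at h2
    exact h2
  have hfd : ∀ y, HasFDerivAt f (D y) y := fun y => (hf.differentiable one_ne_zero y).hasFDerivAt
  have hg : ∀ s : ℝ, HasDerivAt (fun s => f (x + s • e1)) (D (x + s • e1) e1) s := fun s =>
    (hfd (x + s • e1)).comp_hasDerivAt s (hline s)
  have hg2 : ∀ s : ℝ, HasDerivAt (fun s => f (x + s • e1) ^ 2)
      (2 * f (x + s • e1) * (D (x + s • e1) e1)) s := by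
    intro s
    have h := (hg s).mul (hg s)
    have : (fun s : ℝ => f (x + s • e1) ^ 2) = fun s : ℝ => f (x + s • e1) * f (x + s • e1) := by
      funext y; ring
    rw [this]
    exact h.congr_deriv (by ring)
  have hcont : Continuous fun s : ℝ => x + s • e1 :=
    continuous_const.add (continuous_id.smul continuous_const)
  have hDc : Continuous D := hf.continuous_fderiv one_ne_zero
  have hgc : Continuous fun s : ℝ => f (x + s • e1) := hf.continuous.comp hcont
  have hg'c : Continuous fun s : ℝ => D (x + s • e1) e1 :=
    ((hDc.comp hcont).clm_apply continuous_const)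
  have hic : Continuous fun s : ℝ => 2 * f (x + s • e1) * (D (x + s • e1) e1) :=
    (continuous_const.mul hgc).mul hg'c
  have ftc : ∫ s in (0:ℝ)..t, 2 * f (x + s • e1) * (D (x + s • e1) e1)
      = f (x + t • e1) ^ 2 - f (x + (0:ℝ) • e1) ^ 2 :=
    intervalIntegral.integral_eq_sub_of_hasDerivAt (fun s _ => hg2 s)
      (hic.intervalIntegrable 0 t)
  have h0 : f (x + (0:ℝ) • e1) = f x := by simp
  have habs : |∫ s in (0:ℝ)..t, 2 * f (x + s • e1) * (D (x + s • e1) e1)|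
      ≤ ∫ s in (0:ℝ)..t, |2 * f (x + s • e1) * (D (x + s • e1) e1)| :=
    intervalIntegral.abs_integral_le_integral_abs ht
  have hmono : ∫ s in (0:ℝ)..t, |2 * f (x + s • e1) * (D (x + s • e1) e1)|
      ≤ ∫ s in (0:ℝ)..t, (ε * f (x + s • e1) ^ 2 + ε⁻¹ * ‖D (x + s • e1)‖ ^ 2) := by
    have hic2 : Continuous fun s : ℝ => ε * f (x + s • e1) ^ 2 + ε⁻¹ * ‖D (x + s • e1)‖ ^ 2 :=
      (continuous_const.mul (hgc.pow 2)).add (continuous_const.mul (((hDc.comp hcont).norm).pow 2))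
    apply intervalIntegral.integral_mono_on ht (hic.abs.intervalIntegrable 0 t)
      (hic2.intervalIntegrable 0 t)
    intro s _
    have hne1 : ‖e1‖ = 1 := by
      simp [e1, EuclideanSpace.norm_single]
    have h1 : |D (x + s • e1) e1| ≤ ‖D (x + s • e1)‖ := by
      have h := (D (x + s • e1)).le_opNorm e1
      rw [hne1, mul_one] at h
      exact h
    set a := f (x + s • e1) with ha
    set b := D (x + s • e1) e1 with hb
    have hab : |2 * a * b| ≤ 2 * |a| * |b| := by
      rw [abs_mul, abs_mul]; simp
    have key : 2 * |a| * |b| ≤ ε * a ^ 2 + ε⁻¹ * b ^ 2 := by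
      have expand : ε * a ^ 2 + ε⁻¹ * b ^ 2 - 2 * |a| * |b| = ε⁻¹ * ((ε * |a| - |b|) ^ 2) := by
        have hsq : (ε * |a| - |b|) ^ 2 = ε ^ 2 * a ^ 2 - 2 * ε * (|a| * |b|) + b ^ 2 := by
          rw [sub_sq, mul_pow, sq_abs, sq_abs]; ring
        rw [hsq]
        field_simp
        ring
      nlinarith [sq_nonneg (ε * |a| - |b|), inv_pos.mpr hε, mul_nonneg (inv_pos.mpr hε).le (sq_nonneg (ε * |a| - |b|)), expand]
    have hbb : b ^ 2 ≤ ‖D (x + s • e1)‖ ^ 2 := by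
      rw [← sq_abs b]
      exact pow_le_pow_left₀ (abs_nonneg b) h1 2
    have hbb' : ε⁻¹ * b ^ 2 ≤ ε⁻¹ * ‖D (x + s • e1)‖ ^ 2 :=
      mul_le_mul_of_nonneg_left hbb (inv_pos.mpr hε).le
    linarith [hab.trans key]
  rw [h0] at ftc
  linarith [habs, hmono, neg_abs_le (∫ s in (0:ℝ)..t, 2 * f (x + s • e1) * (D (x + s • e1) e1))]


set_option maxHeartbeats 1000000 in
/-- Spectral gap for `−Δ + V` on `ℝ²` with potential `V ≥ 0` bounded below by `1/2`
outside a ball: there is `c > 0` with `c ∫ f² ≤ ∫ (|∇f|² + V f²)` for all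
(H¹, here: C¹) functions `f`. -/
theorem spectral_gap_schroedinger_R2
    (V : EuclideanSpace ℝ (Fin 2) → ℝ) (R : ℝ) (hR : 0 < R)
    (hVmeas : Measurable V) (hV0 : ∀ x, 0 ≤ V x)
    (hV : ∀ x : EuclideanSpace ℝ (Fin 2), R ≤ ‖x‖ → 1 / 2 ≤ V x) :
    ∃ c > (0 : ℝ), ∀ f : EuclideanSpace ℝ (Fin 2) → ℝ, ContDiff ℝ 1 f →
      ENNReal.ofReal c * ∫⁻ x, ENNReal.ofReal (f x ^ 2)
        ≤ ∫⁻ x, ENNReal.ofReal (‖fderiv ℝ f x‖ ^ 2 + V x * f x ^ 2) := by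
  have hRc : 0 < min (1/8 : ℝ) (1/(36 * R ^ 2)) := by positivity
  refine ⟨min (1/8 : ℝ) (1/(36 * R ^ 2)), hRc, ?_⟩
  intro f hf
  set c := min (1/8 : ℝ) (1/(36 * R ^ 2)) with hcdef
  have hc0 : (0:ℝ) ≤ c := hRc.le
  set ε : ℝ := 1 / (6 * R) with hεdef
  have hε : 0 < ε := by positivity
  set D := fderiv ℝ f with hDdef
  have hfc : Continuous f := hf.continuous
  have hDc : Continuous D := hf.continuous_fderiv one_ne_zero
  set F : E2 → ENNReal := fun x => ENNReal.ofReal (f x ^ 2) with hF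
  set G : E2 → ENNReal := fun x => ENNReal.ofReal (‖D x‖ ^ 2) with hG
  have mF : Measurable F := ENNReal.measurable_ofReal.comp ((hfc.pow 2).measurable)
  have mG : Measurable G := ENNReal.measurable_ofReal.comp (((hDc.norm).pow 2).measurable)
  set A := ∫⁻ x, F x with hA
  set Dg := ∫⁻ x, G x with hDg
  set B : Set E2 := Metric.closedBall 0 R with hB
  set Out : Set E2 := {y : E2 | R ≤ ‖y‖} with hOut
  have mOut : MeasurableSet Out :=
    measurableSet_Ici.preimage (continuous_norm).measurable
  set J := ∫⁻ y in Out, F y with hJ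
  set I : Set ℝ := Set.Ioc (2*R) (3*R) with hI
  set K : E2 → ENNReal := fun x => ∫⁻ s in Set.Ioc (0:ℝ) (3*R),
      ENNReal.ofReal (ε * f (x + s • e1) ^ 2 + ε⁻¹ * ‖D (x + s • e1)‖ ^ 2) with hK
  -- continuity of the translated integrand on the product
  have hprodcont : Continuous fun p : E2 × ℝ => f (p.1 + p.2 • e1) :=
    hfc.comp (continuous_fst.add (continuous_snd.smul continuous_const))
  have hprodcontD : Continuous fun p : E2 × ℝ => ‖D (p.1 + p.2 • e1)‖ :=
    (hDc.comp (continuous_fst.add (continuous_snd.smul continuous_const))).norm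
  have mφ : Measurable fun p : E2 × ℝ =>
      ENNReal.ofReal (ε * f (p.1 + p.2 • e1) ^ 2 + ε⁻¹ * ‖D (p.1 + p.2 • e1)‖ ^ 2) :=
    ENNReal.measurable_ofReal.comp
      (((hprodcont.pow 2).const_smul ε).measurable.add
        ((hprodcontD.pow 2).const_smul ε⁻¹).measurable)
  have mK : Measurable K := mφ.lintegral_prod_right'
  have mFt : Measurable fun p : E2 × ℝ => F (p.1 + p.2 • e1) :=
    ENNReal.measurable_ofReal.comp (hprodcont.pow 2).measurable
  have mInner : Measurable fun x => ∫⁻ t in I, F (x + t • e1) :=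
    mFt.lintegral_prod_right'
  -- step 1
  have step1 : ∀ x : E2, ∀ t ∈ I, F x ≤ F (x + t • e1) + K x := by
    intro x t ht
    obtain ⟨ht1, ht2⟩ := ht
    have ht0 : (0:ℝ) ≤ t := by linarith
    have hpt := ptwise f hf x t ε ht0 hε
    have hcont2 : Continuous fun s : ℝ => ε * f (x + s • e1) ^ 2 + ε⁻¹ * ‖D (x + s • e1)‖ ^ 2 := by
      have hc : Continuous fun s : ℝ => x + s • e1 :=
        continuous_const.add (continuous_id.smul continuous_const)
      exact (continuous_const.mul ((hfc.comp hc).pow 2)).add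
        (continuous_const.mul (((hDc.comp hc).norm).pow 2))
    have hnn : ∀ s : ℝ, 0 ≤ ε * f (x + s • e1) ^ 2 + ε⁻¹ * ‖D (x + s • e1)‖ ^ 2 := by
      intro s; positivity
    have hint_nn : 0 ≤ ∫ s in (0:ℝ)..t,
        (ε * f (x + s • e1) ^ 2 + ε⁻¹ * ‖D (x + s • e1)‖ ^ 2) :=
      intervalIntegral.integral_nonneg ht0 (fun s _ => hnn s)
    have h1 : F x ≤ F (x + t • e1) + ENNReal.ofReal (∫ s in (0:ℝ)..t,
        (ε * f (x + s • e1) ^ 2 + ε⁻¹ * ‖D (x + s • e1)‖ ^ 2)) := by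
      rw [hF, ← ENNReal.ofReal_add (by positivity) hint_nn]
      exact ENNReal.ofReal_le_ofReal hpt
    refine h1.trans (add_le_add_right ?_ _)
    rw [intervalIntegral.integral_of_le ht0,
      ofReal_integral_eq_lintegral_ofReal
        (hcont2.integrableOn_Ioc) (ae_of_all _ hnn)]
    exact lintegral_mono_set (Set.Ioc_subset_Ioc_right (by linarith))
  -- step 2
  have step2 : ∀ x : E2, F x * ENNReal.ofReal R
      ≤ (∫⁻ t in I, F (x + t • e1)) + ENNReal.ofReal R * K x := by
    intro x
    have hvol : volume I = ENNReal.ofReal R := by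
      rw [hI, Real.volume_Ioc]; congr 1; ring
    calc F x * ENNReal.ofReal R = ∫⁻ _ in I, F x := by rw [setLIntegral_const, hvol]
      _ ≤ ∫⁻ t in I, (F (x + t • e1) + K x) :=
          setLIntegral_mono' measurableSet_Ioc (step1 x)
      _ = (∫⁻ t in I, F (x + t • e1)) + K x * volume I :=
          by rw [lintegral_add_right _ measurable_const, setLIntegral_const]
      _ = (∫⁻ t in I, F (x + t • e1)) + ENNReal.ofReal R * K x := by rw [hvol, mul_comm]
  -- step 3 : integrate over B
  have step3 : (∫⁻ x in B, F x) * ENNReal.ofReal R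
      ≤ (∫⁻ x in B, ∫⁻ t in I, F (x + t • e1)) + ENNReal.ofReal R * ∫⁻ x in B, K x := by
    calc (∫⁻ x in B, F x) * ENNReal.ofReal R = ∫⁻ x in B, F x * ENNReal.ofReal R :=
          (lintegral_mul_const _ mF).symm
      _ ≤ ∫⁻ x in B, ((∫⁻ t in I, F (x + t • e1)) + ENNReal.ofReal R * K x) :=
          lintegral_mono fun x => step2 x
      _ = (∫⁻ x in B, ∫⁻ t in I, F (x + t • e1)) + ∫⁻ x in B, ENNReal.ofReal R * K x :=
          lintegral_add_left mInner _
      _ = (∫⁻ x in B, ∫⁻ t in I, F (x + t • e1)) + ENNReal.ofReal R * ∫⁻ x in B, K x := by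
          rw [lintegral_const_mul _ mK]
  -- step 4/5 : first term ≤ J * R
  have step5 : (∫⁻ x in B, ∫⁻ t in I, F (x + t • e1)) ≤ J * ENNReal.ofReal R := by
    rw [lintegral_lintegral_swap (mFt.aemeasurable)]
    have hper : ∀ t ∈ I, (∫⁻ x in B, F (x + t • e1)) ≤ J := by
      intro t ⟨ht1, ht2⟩
      have key : ∀ x : E2, B.indicator (fun x => F (x + t • e1)) x
          ≤ Out.indicator F (x + t • e1) := by
        intro x
        by_cases hx : x ∈ B
        · rw [Set.indicator_of_mem hx]
          have hxB : ‖x‖ ≤ R := by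
            simpa [hB, Metric.mem_closedBall, dist_zero_right] using hx
          have hte : ‖t • e1‖ = t := by
            rw [norm_smul, Real.norm_eq_abs, abs_of_pos (by linarith)]
            simp [e1, EuclideanSpace.norm_single]
          have hmem : x + t • e1 ∈ Out := by
            have h := norm_sub_le (x + t • e1) x
            have : x + t • e1 - x = t • e1 := by abel
            rw [this, hte] at h
            simp only [hOut, Set.mem_setOf_eq]
            linarith
          rw [Set.indicator_of_mem hmem]
        · rw [Set.indicator_of_notMem hx]
          exact zero_le
      calc (∫⁻ x in B, F (x + t • e1))
          = ∫⁻ x, B.indicator (fun x => F (x + t • e1)) x :=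
            (lintegral_indicator measurableSet_closedBall _).symm
        _ ≤ ∫⁻ x, Out.indicator F (x + t • e1) := lintegral_mono key
        _ = ∫⁻ y, Out.indicator F y := lintegral_add_right_eq_self (Out.indicator F) (t • e1)
        _ = J := lintegral_indicator mOut F
    calc (∫⁻ t in I, ∫⁻ x in B, F (x + t • e1)) ≤ ∫⁻ _ in I, J :=
          setLIntegral_mono' measurableSet_Ioc hper
      _ = J * ENNReal.ofReal R := by
          rw [setLIntegral_const, hI, Real.volume_Ioc]; congr 2; ring
  -- step 6 : K bound
  have step6 : (∫⁻ x in B, K x)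
      ≤ (ENNReal.ofReal ε * A + ENNReal.ofReal ε⁻¹ * Dg) * ENNReal.ofReal (3*R) := by
    refine (setLIntegral_le_lintegral _ _).trans ?_
    rw [hK]
    rw [lintegral_lintegral_swap (mφ.aemeasurable)]
    have hinner : ∀ s : ℝ, (∫⁻ x, ENNReal.ofReal
        (ε * f (x + s • e1) ^ 2 + ε⁻¹ * ‖D (x + s • e1)‖ ^ 2))
        = ENNReal.ofReal ε * A + ENNReal.ofReal ε⁻¹ * Dg := by
      intro s
      have heq : ∀ x : E2, ENNReal.ofReal
          (ε * f (x + s • e1) ^ 2 + ε⁻¹ * ‖D (x + s • e1)‖ ^ 2)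
          = ENNReal.ofReal ε * F (x + s • e1) + ENNReal.ofReal ε⁻¹ * G (x + s • e1) := by
        intro x
        rw [ENNReal.ofReal_add (by positivity) (by positivity),
          ENNReal.ofReal_mul hε.le, ENNReal.ofReal_mul (by positivity)]
      rw [lintegral_congr heq]
      have mtr : Measurable fun x : E2 => x + s • e1 := measurable_add_const _
      have m1 : Measurable fun x : E2 => F (x + s • e1) := mF.comp mtr
      have m2 : Measurable fun x : E2 => G (x + s • e1) := mG.comp mtr
      rw [lintegral_add_left (m1.const_mul _),
        lintegral_const_mul _ m1, lintegral_const_mul _ m2,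
        lintegral_add_right_eq_self F (s • e1), lintegral_add_right_eq_self G (s • e1)]
    apply le_of_eq
    calc (∫⁻ s in Set.Ioc (0:ℝ) (3*R), ∫⁻ x, ENNReal.ofReal
          (ε * f (x + s • e1) ^ 2 + ε⁻¹ * ‖D (x + s • e1)‖ ^ 2))
        = ∫⁻ _ in Set.Ioc (0:ℝ) (3*R), (ENNReal.ofReal ε * A + ENNReal.ofReal ε⁻¹ * Dg) :=
          lintegral_congr fun s => hinner s
      _ = (ENNReal.ofReal ε * A + ENNReal.ofReal ε⁻¹ * Dg) * ENNReal.ofReal (3*R) := by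
          rw [setLIntegral_const, Real.volume_Ioc]; congr 2; ring
  set H : E2 → ENNReal := fun x => ENNReal.ofReal (V x * f x ^ 2) with hH
  have mH : Measurable H := ENNReal.measurable_ofReal.comp (hVmeas.mul ((hfc.pow 2).measurable))
  set W := ∫⁻ x, H x with hW
  have hT : ∫⁻ x, ENNReal.ofReal (‖D x‖ ^ 2 + V x * f x ^ 2) = Dg + W := by
    rw [hDg, hW, ← lintegral_add_left mG]
    exact lintegral_congr fun x =>
      ENNReal.ofReal_add (by positivity) (mul_nonneg (hV0 x) (by positivity))
  rw [hT]
  -- J ≤ 2 W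
  have hJW : J ≤ 2 * W := by
    rw [hJ]
    calc ∫⁻ y in Out, F y ≤ ∫⁻ y in Out, 2 * H y := by
          refine setLIntegral_mono (mH.const_mul 2) fun x hx => ?_
          have hVx : 1/2 ≤ V x := hV x hx
          have hle : f x ^ 2 ≤ 2 * (V x * f x ^ 2) := by nlinarith [sq_nonneg (f x)]
          calc F x ≤ ENNReal.ofReal (2 * (V x * f x ^ 2)) := ENNReal.ofReal_le_ofReal hle
            _ = 2 * H x := by
                rw [ENNReal.ofReal_mul (by norm_num : (0:ℝ) ≤ 2)]
                norm_num
                rfl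
      _ ≤ ∫⁻ y, 2 * H y := setLIntegral_le_lintegral _ _
      _ = 2 * W := by rw [lintegral_const_mul 2 mH]
  -- complement bound
  have hcompl : ∫⁻ x in Bᶜ, F x ≤ J := by
    refine lintegral_mono_set fun x hx => ?_
    simp only [hB, Set.mem_compl_iff, Metric.mem_closedBall, dist_zero_right, not_le] at hx
    exact hx.le
  clear_value A Dg J W
  -- combine steps into the main bound
  have hmain : ∫⁻ x in B, F x
      ≤ J + ENNReal.ofReal (1/2) * A + ENNReal.ofReal (18 * R ^ 2) * Dg := by
    have hR0 : ENNReal.ofReal R ≠ 0 := (ENNReal.ofReal_pos.mpr hR).ne'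
    have hRt : ENNReal.ofReal R ≠ ⊤ := ENNReal.ofReal_ne_top
    have hchain : (∫⁻ x in B, F x) * ENNReal.ofReal R
        ≤ (J + (ENNReal.ofReal ε * A + ENNReal.ofReal ε⁻¹ * Dg) * ENNReal.ofReal (3*R))
          * ENNReal.ofReal R := by
      refine step3.trans ?_
      have := add_le_add step5 (mul_le_mul_right step6 (ENNReal.ofReal R))
      refine this.trans (le_of_eq ?_)
      ring
    have hdiv := (ENNReal.mul_le_mul_iff_left hR0 hRt).mp hchain
    refine hdiv.trans (le_of_eq ?_)
    have c1 : ENNReal.ofReal ε * ENNReal.ofReal (3*R) = ENNReal.ofReal (1/2) := by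
      rw [← ENNReal.ofReal_mul hε.le]
      congr 1
      rw [hεdef]
      field_simp
      ring
    have c2 : ENNReal.ofReal ε⁻¹ * ENNReal.ofReal (3*R) = ENNReal.ofReal (18 * R ^ 2) := by
      rw [← ENNReal.ofReal_mul (by positivity)]
      congr 1
      rw [hεdef]
      field_simp
      ring
    calc J + (ENNReal.ofReal ε * A + ENNReal.ofReal ε⁻¹ * Dg) * ENNReal.ofReal (3*R)
        = J + (ENNReal.ofReal ε * ENNReal.ofReal (3*R)) * A
            + (ENNReal.ofReal ε⁻¹ * ENNReal.ofReal (3*R)) * Dg := by ring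
      _ = J + ENNReal.ofReal (1/2) * A + ENNReal.ofReal (18 * R ^ 2) * Dg := by rw [c1, c2]
  -- ball integral finite
  have hBfin : ∫⁻ x in B, F x < ⊤ := by
    obtain ⟨C, hC⟩ := (isCompact_closedBall (0:E2) R).exists_bound_of_continuousOn
      hfc.continuousOn
    calc ∫⁻ x in B, F x ≤ ∫⁻ _ in B, ENNReal.ofReal (C^2) := by
          refine setLIntegral_mono' measurableSet_closedBall fun x hx => ?_
          refine ENNReal.ofReal_le_ofReal ?_
          have h1 := hC x hx
          rw [Real.norm_eq_abs] at h1
          nlinarith [abs_nonneg (f x), sq_abs (f x)]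
      _ = ENNReal.ofReal (C^2) * volume B := setLIntegral_const _ _
      _ < ⊤ := ENNReal.mul_lt_top ENNReal.ofReal_lt_top measure_closedBall_lt_top
  have hsplit : A = (∫⁻ x in B, F x) + ∫⁻ x in Bᶜ, F x := by
    rw [hA, ← lintegral_add_compl F (measurableSet_closedBall (x := (0:E2)) (ε := R))]
  -- final arithmetic
  by_cases htop : Dg + W = ⊤
  · rw [htop]; exact le_top
  obtain ⟨hDgt, hWt⟩ := ENNReal.add_ne_top.mp htop
  have h2W : (2 : ENNReal) * W ≠ ⊤ := ENNReal.mul_ne_top (by simp) hWt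
  have hJt : J ≠ ⊤ := ne_top_of_le_ne_top h2W hJW
  have hbt : (∫⁻ x in Bᶜ, F x) ≠ ⊤ := ne_top_of_le_ne_top hJt hcompl
  have hat : (∫⁻ x in B, F x) ≠ ⊤ := hBfin.ne
  have hAt : A ≠ ⊤ := by rw [hsplit]; exact ENNReal.add_ne_top.mpr ⟨hat, hbt⟩
  have hmainR : (∫⁻ x in B, F x).toReal
      ≤ J.toReal + (1/2) * A.toReal + (18 * R ^ 2) * Dg.toReal := by
    have hrhs : J + ENNReal.ofReal (1/2) * A + ENNReal.ofReal (18 * R ^ 2) * Dg ≠ ⊤ :=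
      ENNReal.add_ne_top.mpr ⟨ENNReal.add_ne_top.mpr
        ⟨hJt, ENNReal.mul_ne_top ENNReal.ofReal_ne_top hAt⟩,
        ENNReal.mul_ne_top ENNReal.ofReal_ne_top hDgt⟩
    have := ENNReal.toReal_mono hrhs hmain
    rwa [ENNReal.toReal_add (ENNReal.add_ne_top.mpr
        ⟨hJt, ENNReal.mul_ne_top ENNReal.ofReal_ne_top hAt⟩)
        (ENNReal.mul_ne_top ENNReal.ofReal_ne_top hDgt),
      ENNReal.toReal_add hJt (ENNReal.mul_ne_top ENNReal.ofReal_ne_top hAt),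
      ENNReal.toReal_mul, ENNReal.toReal_mul,
      ENNReal.toReal_ofReal (by norm_num : (0:ℝ) ≤ 1/2),
      ENNReal.toReal_ofReal (by positivity : (0:ℝ) ≤ 18 * R ^ 2)] at this
  have hJWR : J.toReal ≤ 2 * W.toReal := by
    have := ENNReal.toReal_mono h2W hJW
    rwa [ENNReal.toReal_mul, ENNReal.toReal_ofNat] at this
  have hbR : (∫⁻ x in Bᶜ, F x).toReal ≤ J.toReal := ENNReal.toReal_mono hJt hcompl
  have hAR : A.toReal = (∫⁻ x in B, F x).toReal + (∫⁻ x in Bᶜ, F x).toReal := by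
    rw [hsplit, ENNReal.toReal_add hat hbt]
  have creal : c * A.toReal ≤ Dg.toReal + W.toReal := by
    have hc1 : c ≤ 1/8 := min_le_left _ _
    have hc2 : c * (36 * R ^ 2) ≤ 1 := by
      have h := min_le_right (1/8 : ℝ) (1/(36 * R ^ 2))
      rw [← hcdef] at h
      have h36 : (0:ℝ) < 36 * R ^ 2 := by positivity
      calc c * (36 * R ^ 2) ≤ (1/(36 * R ^ 2)) * (36 * R ^ 2) := by
            exact mul_le_mul_of_nonneg_right h h36.le
        _ = 1 := by field_simp
    have key : A.toReal ≤ 8 * W.toReal + 36 * R ^ 2 * Dg.toReal := by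
      linarith [ENNReal.toReal_nonneg (a := ∫⁻ x in B, F x),
        ENNReal.toReal_nonneg (a := Dg), ENNReal.toReal_nonneg (a := W)]
    have t1 : c * A.toReal ≤ c * (8 * W.toReal + 36 * R ^ 2 * Dg.toReal) :=
      mul_le_mul_of_nonneg_left key hc0
    have t2 : c * 8 * W.toReal ≤ 1 * W.toReal :=
      mul_le_mul_of_nonneg_right (by linarith) ENNReal.toReal_nonneg
    have t3 : c * (36 * R ^ 2) * Dg.toReal ≤ 1 * Dg.toReal :=
      mul_le_mul_of_nonneg_right hc2 ENNReal.toReal_nonneg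
    nlinarith [t1, t2, t3]
  calc ENNReal.ofReal c * A = ENNReal.ofReal (c * A.toReal) := by
        rw [ENNReal.ofReal_mul hc0, ENNReal.ofReal_toReal hAt]
    _ ≤ ENNReal.ofReal (Dg.toReal + W.toReal) := ENNReal.ofReal_le_ofReal creal
    _ = ENNReal.ofReal Dg.toReal + ENNReal.ofReal W.toReal :=
        ENNReal.ofReal_add ENNReal.toReal_nonneg ENNReal.toReal_nonneg
    _ = Dg + W := by rw [ENNReal.ofReal_toReal hDgt, ENNReal.ofReal_toReal hWt]
end
end

section
/- Let φ: ℝ² → ℂ be continuous with |φ(x)| ≤ 1 everywhere and |φ(x)| → 1 as |x| → ∞. Then there exist constants 0 < c ≤ 1 such that for all f ∈ H¹(ℝ²), c ‖f‖²_{H¹(ℝ²)} ≤ ∫_{ℝ²} (|∇f|² + |φ|² f²) dx ≤ ‖f‖²_{H¹(ℝ²)}. -/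
open MeasureTheory Set
noncomputable section
namespace HiggsAux

abbrev E2 := EuclideanSpace ℝ (Fin 2)

def Phi : (ℝ × ℝ) ≃L[ℝ] E2 :=
  ((EuclideanSpace.equiv (Fin 2) ℝ).trans (ContinuousLinearEquiv.finTwoArrow ℝ ℝ)).symm

def mE : E2 ≃ᵐ ℝ × ℝ :=
  (MeasurableEquiv.toLp 2 (Fin 2 → ℝ)).symm.trans (MeasurableEquiv.finTwoArrow)

lemma Phi_eq : ⇑Phi = ⇑mE.symm := rfl

lemma measurePreserving_mE : MeasurePreserving mE volume volume :=
  (volume_preserving_finTwoArrow ℝ).comp (EuclideanSpace.volume_preserving_symm_measurableEquiv_toLp (Fin 2))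

lemma measurePreserving_Phi : MeasurePreserving (⇑Phi) volume volume := by
  rw [Phi_eq]; exact MeasurePreserving.symm mE measurePreserving_mE

lemma integral_Phi (F : E2 → ℝ) : ∫ p : ℝ × ℝ, F (Phi p) = ∫ x, F x := by
  rw [Phi_eq]; exact (MeasurePreserving.symm mE measurePreserving_mE).integral_comp' F

lemma integrable_Phi {F : E2 → ℝ} (hF : Integrable F) :
    Integrable (fun p : ℝ × ℝ => F (Phi p)) := by
  rw [Phi_eq]
  exact ((MeasurePreserving.symm mE measurePreserving_mE).integrable_comp_emb mE.symm.measurableEmbedding).2 hF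

lemma norm_Phi (p : ℝ × ℝ) : ‖Phi p‖ = Real.sqrt (p.1 ^ 2 + p.2 ^ 2) := by
  rw [EuclideanSpace.norm_eq]
  norm_num [Fin.sum_univ_two]
  rfl

lemma abs_fst_le (p : ℝ × ℝ) : |p.1| ≤ ‖Phi p‖ := by
  rw [norm_Phi, ← Real.sqrt_sq_eq_abs]
  exact Real.sqrt_le_sqrt (by nlinarith [sq_nonneg p.2])

lemma abs_snd_le (p : ℝ × ℝ) : |p.2| ≤ ‖Phi p‖ := by
  rw [norm_Phi, ← Real.sqrt_sq_eq_abs]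
  exact Real.sqrt_le_sqrt (by nlinarith [sq_nonneg p.1])

lemma norm_Phi_e2 : ‖Phi (0, 1)‖ = 1 := by
  rw [norm_Phi]; norm_num

lemma Phi_decomp (a y : ℝ) : Phi (a, y) = Phi (a, 0) + y • Phi (0, 1) := by
  rw [← Phi.map_smul, ← Phi.map_add]
  norm_num

lemma hasDerivAt_slice {f : E2 → ℝ} (hf : ContDiff ℝ 1 f) (a y : ℝ) :
    HasDerivAt (fun t => f (Phi (a, t))) (fderiv ℝ f (Phi (a, y)) (Phi (0, 1))) y := by
  have h1 : HasDerivAt (fun t : ℝ => Phi (a, t)) (Phi (0, 1)) y := by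
    have : (fun t : ℝ => Phi (a, t)) = fun t => Phi (a, 0) + t • Phi (0, 1) := by
      funext t; exact Phi_decomp a t
    rw [this]
    simpa using (((hasDerivAt_id y).smul_const (Phi (0, 1))).const_add (Phi (a,0)))
  exact ((hf.differentiable one_ne_zero (Phi (a, y))).hasFDerivAt).comp_hasDerivAt y h1

set_option maxHeartbeats 1000000 in
lemma key_gap (V : E2 → ℝ) (hV0 : ∀ x, 0 ≤ V x) {R : ℝ} (hR : 0 < R)
    (hVout : ∀ x : E2, R ≤ ‖x‖ → 1 / 4 ≤ V x)
    (f : E2 → ℝ) (hf : ContDiff ℝ 1 f)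
    (hf2 : Integrable (fun x => f x ^ 2))
    (hdf2 : Integrable (fun x => ‖fderiv ℝ f x‖ ^ 2))
    (hVf2 : Integrable (fun x => V x * f x ^ 2)) :
    ∫ x, f x ^ 2 ≤ (16 * R + 8) * (∫ x, V x * f x ^ 2)
      + 16 * R ^ 2 * (∫ x, ‖fderiv ℝ f x‖ ^ 2) := by
  -- notation in product coordinates
  set g : ℝ × ℝ → ℝ := fun p => f (Phi p) with hg
  set d : ℝ × ℝ → ℝ := fun p => fderiv ℝ f (Phi p) (Phi (0, 1)) with hd
  set F2 : ℝ × ℝ → ℝ := fun p => g p ^ 2 with hF2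
  set D2 : ℝ × ℝ → ℝ := fun p => ‖fderiv ℝ f (Phi p)‖ ^ 2 with hD2
  set VF : ℝ × ℝ → ℝ := fun p => V (Phi p) * g p ^ 2 with hVF
  have hdf : Continuous (fderiv ℝ f) := hf.continuous_fderiv one_ne_zero
  have hgc : Continuous g := hf.continuous.comp Phi.continuous
  have hdc : Continuous d :=
    (ContinuousLinearMap.apply ℝ ℝ (Phi (0,1))).continuous.comp (hdf.comp Phi.continuous)
  have hDc : Continuous fun p : ℝ × ℝ => ‖fderiv ℝ f (Phi p)‖ :=
    (hdf.comp Phi.continuous).norm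
  -- transfers
  have tF2 : ∫ p, F2 p = ∫ x, f x ^ 2 := integral_Phi (fun x => f x ^ 2)
  have tD2 : ∫ p, D2 p = ∫ x, ‖fderiv ℝ f x‖ ^ 2 := integral_Phi (fun x => ‖fderiv ℝ f x‖ ^ 2)
  have tVF : ∫ p, VF p = ∫ x, V x * f x ^ 2 := integral_Phi (fun x => V x * f x ^ 2)
  have iF2 : Integrable F2 := integrable_Phi hf2
  have iD2 : Integrable D2 := integrable_Phi hdf2
  have iVF : Integrable VF := integrable_Phi hVf2
  -- pointwise bounds
  have hdD : ∀ p, |d p| ≤ ‖fderiv ℝ f (Phi p)‖ := by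
    intro p
    calc |d p| ≤ ‖fderiv ℝ f (Phi p)‖ * ‖Phi (0,1)‖ := (fderiv ℝ f (Phi p)).le_opNorm _
    _ = ‖fderiv ℝ f (Phi p)‖ := by rw [norm_Phi_e2, mul_one]
  set δ : ℝ := 1 / (4 * R) with hδdef
  have hδ : 0 < δ := by positivity
  set G : ℝ × ℝ → ℝ := fun p => δ * F2 p + δ⁻¹ * D2 p with hG
  have iG : Integrable G := (iF2.const_mul δ).add (iD2.const_mul δ⁻¹)
  have hG0 : ∀ p, 0 ≤ G p := fun p => by
    have : (0:ℝ) ≤ D2 p := sq_nonneg _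
    have : (0:ℝ) ≤ F2 p := sq_nonneg _
    positivity
  have hGd : ∀ p, 2 * |g p * d p| ≤ G p := by
    intro p
    have h1 : |d p| ^ 2 ≤ D2 p := pow_le_pow_left₀ (abs_nonneg _) (hdD p) 2
    have h4 := mul_nonneg (inv_nonneg.2 hδ.le) (sq_nonneg (δ * |g p| - |d p|))
    have key : δ * |g p| ^ 2 + δ⁻¹ * |d p| ^ 2 - 2 * (|g p| * |d p|)
        = δ⁻¹ * (δ * |g p| - |d p|) ^ 2 := by
      field_simp
      ring_nf
    have h5 : δ⁻¹ * |d p| ^ 2 ≤ δ⁻¹ * D2 p := mul_le_mul_of_nonneg_left h1 (inv_nonneg.2 hδ.le)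
    have habs : δ * |g p| ^ 2 = δ * F2 p := by rw [sq_abs]
    have h6 : 2 * (|g p| * |d p|) ≤ δ * |g p| ^ 2 + δ⁻¹ * |d p| ^ 2 := by linarith
    rw [abs_mul]
    simp only [hG]
    linarith
  -- product measure
  have vol_prod : (volume : Measure (ℝ × ℝ)) = (volume : Measure ℝ).prod volume :=
    Measure.volume_eq_prod ℝ ℝ
  have iF2p : Integrable F2 ((volume : Measure ℝ).prod volume) := by rw [← vol_prod]; exact iF2
  have iGp : Integrable G ((volume : Measure ℝ).prod volume) := by rw [← vol_prod]; exact iG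
  have iVFp : Integrable VF ((volume : Measure ℝ).prod volume) := by rw [← vol_prod]; exact iVF
  have aeF2 : ∀ᵐ x₁ : ℝ, Integrable (fun y => F2 (x₁, y)) := iF2p.prod_right_ae
  have aeG : ∀ᵐ x₁ : ℝ, Integrable (fun y => G (x₁, y)) := iGp.prod_right_ae
  set W : ℝ → ℝ := fun x₁ => ∫ y, G (x₁, y) with hWdef
  have hW0 : ∀ x₁, 0 ≤ W x₁ := fun x₁ => integral_nonneg fun y => hG0 _
  have iW : Integrable W := iGp.integral_prod_left
  have VF0 : ∀ p, 0 ≤ VF p := fun p => mul_nonneg (hV0 _) (sq_nonneg _)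
  -- the sliced inequality, for a.e. x₁
  have main : ∀ᵐ x₁ : ℝ, ∫ a in Icc (-R) R, F2 (x₁, a)
      ≤ 2 * R * ((∫ s in Icc (2*R) (2*R+1), F2 (x₁, s)) + W x₁) := by
    filter_upwards [aeF2, aeG] with x₁ hF2s hGs
    have step1 : ∀ a ∈ Icc (-R) R, ∀ s ∈ Icc (2*R) (2*R+1),
        F2 (x₁, a) ≤ F2 (x₁, s) + W x₁ := by
      intro a ha s hs
      have has : a ≤ s := le_trans ha.2 (by linarith [hs.1])
      have hcont : Continuous (fun t => 2 * g (x₁, t) * d (x₁, t)) := by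
        have h1 : Continuous (fun t : ℝ => (x₁, t)) := Continuous.prodMk_right x₁
        exact ((continuous_const.mul (hgc.comp h1)).mul (hdc.comp h1))
      have ftc : ∫ t in a..s, (2 * g (x₁, t) * d (x₁, t)) = F2 (x₁, s) - F2 (x₁, a) := by
        apply intervalIntegral.integral_eq_sub_of_hasDerivAt
        · intro t ht
          refine ((hasDerivAt_slice hf x₁ t).pow 2).congr_deriv ?_
          norm_num [hg, hd, mul_assoc]
        · exact hcont.intervalIntegrable a s
      have habs : |∫ t in a..s, (2 * g (x₁, t) * d (x₁, t))|
          ≤ ∫ t in a..s, |2 * g (x₁, t) * d (x₁, t)| :=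
        intervalIntegral.abs_integral_le_integral_abs has
      have hmono : (∫ t in a..s, |2 * g (x₁, t) * d (x₁, t)|) ≤ ∫ t in a..s, G (x₁, t) := by
        apply intervalIntegral.integral_mono_on has (hcont.abs.intervalIntegrable a s)
          (hGs.intervalIntegrable)
        intro t ht
        rw [mul_assoc, abs_mul, abs_two]
        exact hGd (x₁, t)
      have hint : (∫ t in a..s, G (x₁, t)) ≤ W x₁ := by
        rw [intervalIntegral.integral_of_le has]
        exact (setIntegral_le_integral hGs (Filter.Eventually.of_forall fun t => hG0 _)).trans
          le_rfl
      linarith [neg_abs_le (∫ t in a..s, (2 * g (x₁, t) * d (x₁, t)))]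
    have mIcc : (volume (Icc (2*R) (2*R+1))).toReal = 1 := by
      rw [Real.volume_Icc]
      norm_num
    have step2 : ∀ a ∈ Icc (-R) R,
        F2 (x₁, a) ≤ (∫ s in Icc (2*R) (2*R+1), F2 (x₁, s)) + W x₁ := by
      intro a ha
      have hconst : (∫ (_ : ℝ) in Icc (2*R) (2*R+1), F2 (x₁, a)) = F2 (x₁, a) := by
        rw [setIntegral_const, smul_eq_mul, measureReal_def, mIcc, one_mul]
      have hmono2 : (∫ (_ : ℝ) in Icc (2*R) (2*R+1), F2 (x₁, a))
          ≤ ∫ s in Icc (2*R) (2*R+1), (F2 (x₁, s) + W x₁) := by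
        apply setIntegral_mono_on (integrableOn_const measure_Icc_lt_top.ne)
          ((hF2s.integrableOn).add (integrableOn_const measure_Icc_lt_top.ne))
          measurableSet_Icc
        intro s hs
        exact step1 a ha s hs
      have hsplit : (∫ s in Icc (2*R) (2*R+1), (F2 (x₁, s) + W x₁))
          = (∫ s in Icc (2*R) (2*R+1), F2 (x₁, s)) + W x₁ := by
        rw [integral_add (hF2s.integrableOn) (integrableOn_const measure_Icc_lt_top.ne),
          setIntegral_const, smul_eq_mul, measureReal_def, mIcc, one_mul]
      rw [hconst, hsplit] at hmono2
      exact hmono2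
    have mIcc2 : (volume (Icc (-R) R)).toReal = 2 * R := by
      rw [Real.volume_Icc, ENNReal.toReal_ofReal (by linarith)]
      ring
    calc ∫ a in Icc (-R) R, F2 (x₁, a)
        ≤ ∫ (_ : ℝ) in Icc (-R) R, ((∫ s in Icc (2*R) (2*R+1), F2 (x₁, s)) + W x₁) := by
          apply setIntegral_mono_on (hF2s.integrableOn)
            (integrableOn_const measure_Icc_lt_top.ne) measurableSet_Icc
          intro a ha
          exact step2 a ha
      _ = 2 * R * ((∫ s in Icc (2*R) (2*R+1), F2 (x₁, s)) + W x₁) := by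
          rw [setIntegral_const, smul_eq_mul, measureReal_def, mIcc2]
  -- sets
  set Q : Set (ℝ × ℝ) := (Icc (-R) R) ×ˢ (Icc (-R) R) with hQdef
  set T : Set (ℝ × ℝ) := (Icc (-R) R) ×ˢ (Icc (2*R) (2*R+1)) with hTdef
  have hQm : MeasurableSet Q := measurableSet_Icc.prod measurableSet_Icc
  have hTm : MeasurableSet T := measurableSet_Icc.prod measurableSet_Icc
  -- iterated forms
  have hQprod : ∫ p in Q, F2 p = ∫ x₁ in Icc (-R) R, ∫ a in Icc (-R) R, F2 (x₁, a) := by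
    rw [hQdef, vol_prod]
    exact setIntegral_prod F2 (by rw [← vol_prod]; exact iF2.integrableOn)
  have hTprod : ∫ p in T, F2 p = ∫ x₁ in Icc (-R) R, ∫ s in Icc (2*R) (2*R+1), F2 (x₁, s) := by
    rw [hTdef, vol_prod]
    exact setIntegral_prod F2 (by rw [← vol_prod]; exact iF2.integrableOn)
  -- integrability of slice integrals over the base interval
  have iSliceQ : Integrable (fun x₁ => ∫ a in Icc (-R) R, F2 (x₁, a))
      (volume.restrict (Icc (-R) R)) := by
    have : Integrable F2 (((volume : Measure ℝ).restrict (Icc (-R) R)).prod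
        ((volume : Measure ℝ).restrict (Icc (-R) R))) := by
      rw [Measure.prod_restrict, ← vol_prod]
      exact iF2.integrableOn
    exact this.integral_prod_left
  have iSliceT : Integrable (fun x₁ => ∫ s in Icc (2*R) (2*R+1), F2 (x₁, s))
      (volume.restrict (Icc (-R) R)) := by
    have : Integrable F2 (((volume : Measure ℝ).restrict (Icc (-R) R)).prod
        ((volume : Measure ℝ).restrict (Icc (2*R) (2*R+1)))) := by
      rw [Measure.prod_restrict, ← vol_prod]
      exact iF2.integrableOn
    exact this.integral_prod_left
  -- integrate `main` over the base interval
  have intmain : ∫ p in Q, F2 p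
      ≤ ∫ x₁ in Icc (-R) R, 2 * R * ((∫ s in Icc (2*R) (2*R+1), F2 (x₁, s)) + W x₁) := by
    rw [hQprod]
    exact integral_mono_ae iSliceQ
      (((iSliceT.add iW.integrableOn).const_mul (2*R)))
      (ae_restrict_of_ae main)
  have rhs_eq : (∫ x₁ in Icc (-R) R, 2 * R * ((∫ s in Icc (2*R) (2*R+1), F2 (x₁, s)) + W x₁))
      = 2 * R * ((∫ p in T, F2 p) + ∫ x₁ in Icc (-R) R, W x₁) := by
    rw [integral_const_mul, integral_add iSliceT iW.integrableOn, hTprod]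
  -- bound the W term
  have hWbound : (∫ x₁ in Icc (-R) R, W x₁) ≤ δ * (∫ p, F2 p) + δ⁻¹ * (∫ p, D2 p) := by
    have h1 : (∫ x₁ in Icc (-R) R, W x₁) ≤ ∫ x₁, W x₁ :=
      setIntegral_le_integral iW (Filter.Eventually.of_forall hW0)
    have h2 : (∫ x₁ : ℝ, W x₁) = ∫ p, G p := by
      rw [vol_prod]
      exact (integral_prod G iGp).symm
    have h3 : (∫ p, G p) = δ * (∫ p, F2 p) + δ⁻¹ * (∫ p, D2 p) := by
      rw [hG]
      rw [integral_add (iF2.const_mul δ) (iD2.const_mul δ⁻¹), integral_const_mul,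
        integral_const_mul]
    linarith
  -- T is far from the origin
  have hTbound : (∫ p in T, F2 p) ≤ 4 * ∫ p, VF p := by
    have mono : (∫ p in T, F2 p) ≤ ∫ p in T, 4 * VF p := by
      apply setIntegral_mono_on iF2.integrableOn ((iVF.const_mul 4).integrableOn) hTm
      intro p hp
      have hp2 : 2 * R ≤ p.2 := (hp.2).1
      have hnorm : R ≤ ‖Phi p‖ :=
        le_trans (le_trans (by linarith) (le_abs_self p.2)) (abs_snd_le p)
      have hV := hVout (Phi p) hnorm
      have hg2 : (0:ℝ) ≤ g p ^ 2 := sq_nonneg _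
      simp only [hVF, hF2]
      nlinarith
    have mono2 : (∫ p in T, 4 * VF p) = 4 * ∫ p in T, VF p := integral_const_mul 4 _
    have mono3 : (∫ p in T, VF p) ≤ ∫ p, VF p :=
      setIntegral_le_integral iVF (Filter.Eventually.of_forall VF0)
    linarith
  -- complement bound
  have hQc : (∫ p in Qᶜ, F2 p) ≤ 4 * ∫ p, VF p := by
    have mono : (∫ p in Qᶜ, F2 p) ≤ ∫ p in Qᶜ, 4 * VF p := by
      apply setIntegral_mono_on iF2.integrableOn ((iVF.const_mul 4).integrableOn) hQm.compl
      intro p hp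
      have hnorm : R ≤ ‖Phi p‖ := by
        rw [hQdef, Set.mem_compl_iff, Set.mem_prod] at hp
        push_neg at hp
        by_cases h1 : p.1 ∈ Icc (-R) R
        · have h2 := hp h1
          rw [mem_Icc] at h2
          push_neg at h2
          have : R ≤ |p.2| := by
            rcases le_or_gt (-R) p.2 with hc | hc
            · have := h2 hc
              exact le_trans this.le (le_abs_self p.2)
            · rw [abs_of_neg (by linarith)]
              linarith
          exact le_trans this (abs_snd_le p)
        · rw [mem_Icc] at h1
          push_neg at h1
          have : R ≤ |p.1| := by
            rcases le_or_gt (-R) p.1 with hc | hc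
            · have := h1 hc
              exact le_trans this.le (le_abs_self p.1)
            · rw [abs_of_neg (by linarith)]
              linarith
          exact le_trans this (abs_fst_le p)
      have hV := hVout (Phi p) hnorm
      have hg2 : (0:ℝ) ≤ g p ^ 2 := sq_nonneg _
      simp only [hVF, hF2]
      nlinarith
    have mono2 : (∫ p in Qᶜ, 4 * VF p) = 4 * ∫ p in Qᶜ, VF p := integral_const_mul 4 _
    have mono3 : (∫ p in Qᶜ, VF p) ≤ ∫ p, VF p :=
      setIntegral_le_integral iVF (Filter.Eventually.of_forall VF0)
    linarith
  have split : (∫ p, F2 p) = (∫ p in Q, F2 p) + ∫ p in Qᶜ, F2 p :=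
    (integral_add_compl hQm iF2).symm
  -- arithmetic with δ
  have hd1 : 2 * R * δ = 1 / 2 := by
    rw [hδdef]
    field_simp
    ring
  have hd2 : δ⁻¹ = 4 * R := by
    rw [hδdef, one_div, inv_inv]
  rw [← tF2, ← tVF, ← tD2]
  have hD2nn : (0:ℝ) ≤ ∫ p, D2 p := integral_nonneg fun p => sq_nonneg _
  have hVFnn : (0:ℝ) ≤ ∫ p, VF p := integral_nonneg VF0
  have final : (∫ p in Q, F2 p)
      ≤ 2 * R * (4 * (∫ p, VF p) + (δ * (∫ p, F2 p) + δ⁻¹ * (∫ p, D2 p))) := by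
    calc (∫ p in Q, F2 p)
        ≤ 2 * R * ((∫ p in T, F2 p) + ∫ x₁ in Icc (-R) R, W x₁) := by
          rw [← rhs_eq]; exact intmain
      _ ≤ 2 * R * (4 * (∫ p, VF p) + (δ * (∫ p, F2 p) + δ⁻¹ * (∫ p, D2 p))) := by
          apply mul_le_mul_of_nonneg_left _ (by linarith)
          linarith
  have expand : 2 * R * (4 * (∫ p, VF p) + (δ * (∫ p, F2 p) + δ⁻¹ * (∫ p, D2 p)))
      = 8 * R * (∫ p, VF p) + (1/2) * (∫ p, F2 p) + 8 * R^2 * (∫ p, D2 p) := by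
    have h8 : 2 * R * δ⁻¹ = 8 * R ^ 2 := by rw [hd2]; ring
    linear_combination (∫ p, F2 p) * hd1 + (∫ p, D2 p) * h8
  linarith [final, hQc, split, expand]

end HiggsAux

open HiggsAux in
set_option maxHeartbeats 1000000 in
/-- Coercivity of the quadratic form `f ↦ ∫ (|∇f|² + |φ|² f²)` on `H¹(ℝ²)` when
`|φ| ≤ 1` and `|φ| → 1` at infinity: there is `0 < c ≤ 1` with
`c ‖f‖²_{H¹} ≤ ∫ (|∇f|² + |φ|² f²) ≤ ‖f‖²_{H¹}`. -/
theorem higgs_quadratic_form_coercive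
    (φ : EuclideanSpace ℝ (Fin 2) → ℂ)
    (hφc : Continuous φ) (hφ1 : ∀ x, ‖φ x‖ ≤ 1)
    (hφinf : Filter.Tendsto (fun x => ‖φ x‖)
      (Filter.cocompact (EuclideanSpace ℝ (Fin 2))) (nhds 1)) :
    ∃ c : ℝ, 0 < c ∧ c ≤ 1 ∧
      ∀ f : EuclideanSpace ℝ (Fin 2) → ℝ, ContDiff ℝ 1 f →
        Integrable (fun x => f x ^ 2) →
        Integrable (fun x => ‖fderiv ℝ f x‖ ^ 2) →
        c * (∫ x, (f x ^ 2 + ‖fderiv ℝ f x‖ ^ 2))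
            ≤ (∫ x, (‖fderiv ℝ f x‖ ^ 2 + Complex.normSq (φ x) * f x ^ 2))
          ∧ (∫ x, (‖fderiv ℝ f x‖ ^ 2 + Complex.normSq (φ x) * f x ^ 2))
            ≤ ∫ x, (f x ^ 2 + ‖fderiv ℝ f x‖ ^ 2) := by
  set V : EuclideanSpace ℝ (Fin 2) → ℝ := fun x => Complex.normSq (φ x) with hVdef
  have hV0 : ∀ x, 0 ≤ V x := fun x => Complex.normSq_nonneg _
  have hV1 : ∀ x, V x ≤ 1 := by
    intro x
    have h1 : V x = ‖φ x‖ ^ 2 := (Complex.sq_norm (φ x)).symm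
    rw [h1]
    have := hφ1 x
    nlinarith [norm_nonneg (φ x)]
  have hVc : Continuous V := Complex.continuous_normSq.comp hφc
  -- find R such that V ≥ 1/4 outside the ball of radius R
  have h12 : ∀ᶠ x in Filter.cocompact (EuclideanSpace ℝ (Fin 2)),
      1 / 2 ≤ ‖φ x‖ := hφinf.eventually (eventually_ge_nhds (by norm_num))
  obtain ⟨K, hK, hKsub⟩ := (Filter.hasBasis_cocompact.eventually_iff).1 h12
  obtain ⟨R₀, hR₀⟩ := hK.isBounded.subset_closedBall 0
  set R : ℝ := max R₀ 0 + 1 with hRdef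
  have hR : 0 < R := by positivity
  have hVout : ∀ x : EuclideanSpace ℝ (Fin 2), R ≤ ‖x‖ → 1 / 4 ≤ V x := by
    intro x hx
    have hxK : x ∉ K := by
      intro hmem
      have := hR₀ hmem
      rw [Metric.mem_closedBall, dist_zero_right] at this
      have : R₀ ≤ max R₀ 0 := le_max_left _ _
      linarith [hR₀ hmem, mem_closedBall_zero_iff.1 (hR₀ hmem)]
    have habs : 1 / 2 ≤ ‖φ x‖ := hKsub hxK
    have h1 : V x = ‖φ x‖ ^ 2 := (Complex.sq_norm (φ x)).symm
    rw [h1]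
    nlinarith
  set c : ℝ := 1 / (16 * R ^ 2 + 16 * R + 9) with hcdef
  have hden : (0:ℝ) < 16 * R ^ 2 + 16 * R + 9 := by positivity
  have hcpos : 0 < c := by positivity
  have hc1 : c ≤ 1 := by
    rw [hcdef]
    rw [div_le_one hden]
    nlinarith
  have hc : c * (16 * R ^ 2 + 16 * R + 9) = 1 := by
    rw [hcdef]
    field_simp
  refine ⟨c, hcpos, hc1, ?_⟩
  intro f hf hf2 hdf2
  have iVf : Integrable (fun x => V x * f x ^ 2) := by
    apply Integrable.mono' hf2
      ((hVc.mul ((hf.continuous).pow 2)).aestronglyMeasurable)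
    filter_upwards with x
    rw [Real.norm_eq_abs, Pi.mul_apply, Pi.pow_apply, abs_of_nonneg (mul_nonneg (hV0 x) (sq_nonneg _))]
    nlinarith [hV0 x, hV1 x, sq_nonneg (f x)]
  have hsum1 : (∫ x, (f x ^ 2 + ‖fderiv ℝ f x‖ ^ 2))
      = (∫ x, f x ^ 2) + ∫ x, ‖fderiv ℝ f x‖ ^ 2 := integral_add hf2 hdf2
  have hsum2 : (∫ x, (‖fderiv ℝ f x‖ ^ 2 + V x * f x ^ 2))
      = (∫ x, ‖fderiv ℝ f x‖ ^ 2) + ∫ x, V x * f x ^ 2 := integral_add hdf2 iVf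
  have hIV0 : (0:ℝ) ≤ ∫ x, V x * f x ^ 2 :=
    integral_nonneg fun x => mul_nonneg (hV0 x) (sq_nonneg _)
  have hID0 : (0:ℝ) ≤ ∫ x, ‖fderiv ℝ f x‖ ^ 2 := integral_nonneg fun x => sq_nonneg _
  have key := key_gap V hV0 hR hVout f hf hf2 hdf2 iVf
  constructor
  · rw [hsum1, hsum2]
    have h1 : c * (16 * R + 8) ≤ 1 := by nlinarith [mul_nonneg hcpos.le (by positivity : (0:ℝ) ≤ 16 * R ^ 2 + 1)]
    have h2 : c * (16 * R ^ 2 + 1) ≤ 1 := by nlinarith [mul_nonneg hcpos.le (by positivity : (0:ℝ) ≤ 16 * R + 8)]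
    nlinarith [mul_le_mul_of_nonneg_left key hcpos.le,
      mul_le_mul_of_nonneg_right h1 hIV0, mul_le_mul_of_nonneg_right h2 hID0]
  · rw [hsum1, hsum2]
    have : (∫ x, V x * f x ^ 2) ≤ ∫ x, f x ^ 2 := by
      apply integral_mono iVf hf2
      intro x
      show V x * f x ^ 2 ≤ f x ^ 2
      nlinarith [mul_nonneg (sub_nonneg.2 (hV1 x)) (sq_nonneg (f x))]
    linarith
end
end

section
/- For the N-vortex moduli space with lifted tangent vectors ñ_μ(q) = (𝒟_μ φ(q), ℱ_{μa}(q)) where 𝒟_μ = ∂_μ − iχ_μ and ℱ_{μa} = ∂_μ 𝒜_a − ∂_a χ_μ, the commutator identity J_{μν} − J_{νμ} = −(iφ ℱ_{μν}, ∂_a ℱ_{μν}) holds, where J_{μν} := (𝒟_μ 𝒟_ν φ(q), ∂_μ ℱ_{νa}(q)) and ℱ_{μν} = ∂_μ χ_ν − ∂_ν χ_μ. Consequently, since each ñ_λ satisfies the gauge-orthogonality condition ∂_a (ñ_λ)_a = (iφ, (ñ_λ)_φ), one has (J_{μν}, ñ_λ)_{L²(ℝ²)} = (J_{νμ}, ñ_λ)_{L²(ℝ²)}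 for all μ, ν, λ. -/
open MeasureTheory

noncomputable section

/-- The domain `ℝ² × ℝ^m`: spatial variables `x_a` and moduli parameters `q_μ`. -/
abbrev Dom (m : ℕ) := EuclideanSpace ℝ (Fin 2) × EuclideanSpace ℝ (Fin m)

/-- Spatial partial derivative `∂_a`. -/
def pdx {m : ℕ} {E : Type*} [NormedAddCommGroup E] [NormedSpace ℝ E]
    (a : Fin 2) (f : Dom m → E) (p : Dom m) : E :=
  fderiv ℝ f p (EuclideanSpace.single a 1, 0)

/-- Moduli partial derivative `∂_μ`. -/
def pdq {m : ℕ} {E : Type*} [NormedAddCommGroup E] [NormedSpace ℝ E]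
    (μ : Fin m) (f : Dom m → E) (p : Dom m) : E :=
  fderiv ℝ f p (0, EuclideanSpace.single μ 1)

/-- `𝒟_μ f = ∂_μ f − i χ_μ f`. -/
def Dq {m : ℕ} (χ : Fin m → Dom m → ℝ) (μ : Fin m) (f : Dom m → ℂ) : Dom m → ℂ :=
  fun p => pdq μ f p - Complex.I * (χ μ p) * f p

/-- `ℱ_{μa} = ∂_μ 𝒜_a − ∂_a χ_μ`. -/
def Fxm {m : ℕ} (𝒜 : Fin 2 → Dom m → ℝ) (χ : Fin m → Dom m → ℝ)
    (μ : Fin m) (a : Fin 2) : Dom m → ℝ :=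
  fun p => pdq μ (𝒜 a) p - pdx a (χ μ) p

/-- `ℱ_{μν} = ∂_μ χ_ν − ∂_ν χ_μ`. -/
def Fqq {m : ℕ} (χ : Fin m → Dom m → ℝ) (μ ν : Fin m) : Dom m → ℝ :=
  fun p => pdq μ (χ ν) p - pdq ν (χ μ) p

section Helpers

variable {E F : Type*} [NormedAddCommGroup E] [NormedSpace ℝ E]
  [NormedAddCommGroup F] [NormedSpace ℝ F]

lemma pd_contDiff {f : E → F} (hf : ContDiff ℝ (⊤ : ℕ∞) f) (v : E) :
    ContDiff ℝ (⊤ : ℕ∞) (fun p => fderiv ℝ f p v) :=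
  (hf.fderiv_right (m := (⊤ : ℕ∞)) (by simp)).clm_apply contDiff_const

lemma pd_symm {f : E → F} (hf : ContDiff ℝ (⊤ : ℕ∞) f) (v w : E) (p : E) :
    fderiv ℝ (fun q => fderiv ℝ f q v) p w = fderiv ℝ (fun q => fderiv ℝ f q w) p v := by
  have hd : DifferentiableAt ℝ (fderiv ℝ f) p :=
    ((hf.fderiv_right (m := (⊤ : ℕ∞)) (by simp)).differentiable (by simp)) p
  have h1 : ∀ u : E, fderiv ℝ (fun q => fderiv ℝ f q u) p
      = (fderiv ℝ (fderiv ℝ f) p).flip u := by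
    intro u
    have := fderiv_clm_apply (c := fderiv ℝ f) (u := fun _ => u) hd (differentiableAt_const u)
    simpa using this
  have hsymm : IsSymmSndFDerivAt ℝ f p :=
    (hf.contDiffAt).isSymmSndFDerivAt (by rw [minSmoothness_of_isRCLikeNormedField]; show ((2 : ℕ∞) : WithTop ℕ∞) ≤ _; exact WithTop.coe_le_coe.2 le_top)
  rw [h1 v, h1 w]
  simpa using (hsymm.eq w v)

variable {m : ℕ}

lemma smooth_diffAt {f : Dom m → F} (hf : ContDiff ℝ (⊤ : ℕ∞) f) (p : Dom m) :
    DifferentiableAt ℝ f p :=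
  (hf.differentiable (by simp)) p

lemma pdq_contDiff {f : Dom m → F} (hf : ContDiff ℝ (⊤ : ℕ∞) f) (μ : Fin m) :
    ContDiff ℝ (⊤ : ℕ∞) (pdq μ f) :=
  pd_contDiff hf _

lemma pdx_contDiff {f : Dom m → F} (hf : ContDiff ℝ (⊤ : ℕ∞) f) (a : Fin 2) :
    ContDiff ℝ (⊤ : ℕ∞) (pdx a f) :=
  pd_contDiff hf _

lemma pdq_pdq_comm {f : Dom m → F} (hf : ContDiff ℝ (⊤ : ℕ∞) f) (μ ν : Fin m) (p : Dom m) :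
    pdq μ (pdq ν f) p = pdq ν (pdq μ f) p := by
  simp only [pdq]
  exact pd_symm hf _ _ p

lemma pdq_pdx_comm {f : Dom m → F} (hf : ContDiff ℝ (⊤ : ℕ∞) f) (μ : Fin m) (a : Fin 2)
    (p : Dom m) : pdq μ (pdx a f) p = pdx a (pdq μ f) p := by
  simp only [pdq, pdx]
  exact pd_symm hf _ _ p

lemma pdq_sub {f g : Dom m → F} (μ : Fin m) (p : Dom m)
    (hf : DifferentiableAt ℝ f p) (hg : DifferentiableAt ℝ g p) :
    pdq μ (fun q => f q - g q) p = pdq μ f p - pdq μ g p := by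
  simp only [pdq]
  rw [fderiv_fun_sub hf hg]
  rfl

lemma pdx_sub {f g : Dom m → F} (a : Fin 2) (p : Dom m)
    (hf : DifferentiableAt ℝ f p) (hg : DifferentiableAt ℝ g p) :
    pdx a (fun q => f q - g q) p = pdx a f p - pdx a g p := by
  simp only [pdx]
  rw [fderiv_fun_sub hf hg]
  rfl

lemma pdq_mul {𝔸 : Type*} [NormedCommRing 𝔸] [NormedAlgebra ℝ 𝔸] {f g : Dom m → 𝔸}
    (μ : Fin m) (p : Dom m)
    (hf : DifferentiableAt ℝ f p) (hg : DifferentiableAt ℝ g p) :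
    pdq μ (fun q => f q * g q) p = pdq μ f p * g p + f p * pdq μ g p := by
  simp only [pdq]
  rw [fderiv_fun_mul hf hg]
  simp [smul_eq_mul]; ring

lemma pdx_mul {𝔸 : Type*} [NormedCommRing 𝔸] [NormedAlgebra ℝ 𝔸] {f g : Dom m → 𝔸}
    (a : Fin 2) (p : Dom m)
    (hf : DifferentiableAt ℝ f p) (hg : DifferentiableAt ℝ g p) :
    pdx a (fun q => f q * g q) p = pdx a f p * g p + f p * pdx a g p := by
  simp only [pdx]
  rw [fderiv_fun_mul hf hg]
  simp [smul_eq_mul]; ring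

lemma pdq_ofReal {f : Dom m → ℝ} (μ : Fin m) (p : Dom m) (hf : DifferentiableAt ℝ f p) :
    pdq μ (fun q => ((f q : ℝ) : ℂ)) p = ((pdq μ f p : ℝ) : ℂ) := by
  simp only [pdq]
  have h : HasFDerivAt (fun q => ((f q : ℝ) : ℂ)) (Complex.ofRealCLM.comp (fderiv ℝ f p)) p :=
    Complex.ofRealCLM.hasFDerivAt.comp p hf.hasFDerivAt
  rw [h.fderiv]
  rfl

lemma rip_sub_left (x y z : ℂ) : rip (x - y) z = rip x z - rip y z := by
  simp [rip, sub_mul]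

lemma rip_neg_left (x z : ℂ) : rip (-x) z = - rip x z := by
  simp [rip]

lemma rip_mul_ofReal (x z : ℂ) (r : ℝ) : rip (x * (r : ℂ)) z = r * rip x z := by
  simp only [rip]
  rw [show x * (r : ℂ) * (starRingEnd ℂ) z = (r : ℂ) * (x * (starRingEnd ℂ) z) by ring,
    Complex.re_ofReal_mul]

end Helpers

section Pointwise

variable {m : ℕ} {φ : Dom m → ℂ} {𝒜 : Fin 2 → Dom m → ℝ} {χ : Fin m → Dom m → ℝ}

lemma Iχφ_contDiff (hχν : ContDiff ℝ (⊤ : ℕ∞) (χ ν)) (hφ : ContDiff ℝ (⊤ : ℕ∞) φ) :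
    ContDiff ℝ (⊤ : ℕ∞) (fun p : Dom m => Complex.I * (χ ν p) * φ p) := by
  have h1 : ContDiff ℝ (⊤ : ℕ∞) (fun p : Dom m => ((χ ν p : ℝ) : ℂ)) :=
    Complex.ofRealCLM.contDiff.comp hχν
  exact (contDiff_const.mul h1).mul hφ

lemma Dq_contDiff (hχν : ContDiff ℝ (⊤ : ℕ∞) (χ ν)) (hφ : ContDiff ℝ (⊤ : ℕ∞) φ) :
    ContDiff ℝ (⊤ : ℕ∞) (Dq χ ν φ) :=
  (pdq_contDiff hφ ν).sub (Iχφ_contDiff hχν hφ)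

lemma pdq_Iχφ (hχν : ContDiff ℝ (⊤ : ℕ∞) (χ ν)) (hφ : ContDiff ℝ (⊤ : ℕ∞) φ)
    (μ : Fin m) (p : Dom m) :
    pdq μ (fun p => Complex.I * (χ ν p) * φ p) p
      = Complex.I * ((pdq μ (χ ν) p : ℝ) : ℂ) * φ p + Complex.I * (χ ν p) * pdq μ φ p := by
  have hc : DifferentiableAt ℝ (fun p : Dom m => Complex.I * ((χ ν p : ℝ) : ℂ)) p :=
    smooth_diffAt (contDiff_const.mul (Complex.ofRealCLM.contDiff.comp hχν)) p
  rw [pdq_mul μ p hc (smooth_diffAt hφ p)]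
  have hr : DifferentiableAt ℝ (fun p : Dom m => ((χ ν p : ℝ) : ℂ)) p :=
    smooth_diffAt (Complex.ofRealCLM.contDiff.comp hχν) p
  have h2 : pdq μ (fun p : Dom m => Complex.I * ((χ ν p : ℝ) : ℂ)) p
      = Complex.I * ((pdq μ (χ ν) p : ℝ) : ℂ) := by
    simp only [pdq]
    rw [fderiv_const_mul hr Complex.I, ContinuousLinearMap.smul_apply, smul_eq_mul]
    congr 1
    exact pdq_ofReal μ p (smooth_diffAt hχν p)
  rw [h2]

lemma part1a (hφ : ContDiff ℝ (⊤ : ℕ∞) φ) (hχ : ∀ μ, ContDiff ℝ (⊤ : ℕ∞) (χ μ))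
    (μ ν : Fin m) (p : Dom m) :
    Dq χ μ (Dq χ ν φ) p - Dq χ ν (Dq χ μ φ) p
      = -(Complex.I * φ p * ((Fqq χ μ ν p : ℝ) : ℂ)) := by
  have key : ∀ α β : Fin m, pdq α (Dq χ β φ) p
      = pdq α (pdq β φ) p - (Complex.I * ((pdq α (χ β) p : ℝ) : ℂ) * φ p
          + Complex.I * (χ β p) * pdq α φ p) := by
    intro α β
    have h1 : pdq α (Dq χ β φ) p
        = pdq α (pdq β φ) p - pdq α (fun p => Complex.I * (χ β p) * φ p) p :=
      pdq_sub α p (smooth_diffAt (pdq_contDiff hφ β) p)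
        (smooth_diffAt (Iχφ_contDiff (hχ β) hφ) p)
    rw [h1, pdq_Iχφ (hχ β) hφ α p]
  simp only [Dq, Fqq]
  rw [key μ ν, key ν μ, pdq_pdq_comm hφ μ ν p]
  push_cast
  ring

lemma part1b (hφ : ContDiff ℝ (⊤ : ℕ∞) φ) (h𝒜 : ∀ a, ContDiff ℝ (⊤ : ℕ∞) (𝒜 a))
    (hχ : ∀ μ, ContDiff ℝ (⊤ : ℕ∞) (χ μ)) (μ ν : Fin m) (p : Dom m) (a : Fin 2) :
    pdq μ (Fxm 𝒜 χ ν a) p - pdq ν (Fxm 𝒜 χ μ a) p = -(pdx a (Fqq χ μ ν) p) := by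
  have key : ∀ α β : Fin m, pdq α (Fxm 𝒜 χ β a) p
      = pdq α (pdq β (𝒜 a)) p - pdx a (pdq α (χ β)) p := by
    intro α β
    have h1 : pdq α (Fxm 𝒜 χ β a) p
        = pdq α (pdq β (𝒜 a)) p - pdq α (pdx a (χ β)) p :=
      pdq_sub α p (smooth_diffAt (pdq_contDiff (h𝒜 a) β) p)
        (smooth_diffAt (pdx_contDiff (hχ β) a) p)
    rw [h1, pdq_pdx_comm (hχ β) α a p]
  have h2 : pdx a (Fqq χ μ ν) p = pdx a (pdq μ (χ ν)) p - pdx a (pdq ν (χ μ)) p :=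
    pdx_sub a p (smooth_diffAt (pdq_contDiff (hχ ν) μ) p)
      (smooth_diffAt (pdq_contDiff (hχ μ) ν) p)
  rw [key μ ν, key ν μ, h2, pdq_pdq_comm (h𝒜 a) μ ν p]
  ring

end Pointwise

/-- The commutator identity `J_{μν} − J_{νμ} = −(iφ ℱ_{μν}, ∂_a ℱ_{μν})` for the
lifted moduli-space data `J_{μν} = (𝒟_μ 𝒟_ν φ, ∂_μ ℱ_{νa})`; consequently, since each
`ñ_λ = (𝒟_λ φ, ℱ_{λa})` is gauge-orthogonal (`∂_a ℱ_{λa} = (iφ, 𝒟_λ φ)`), the `L²(ℝ²)`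
pairings satisfy `(J_{μν}, ñ_λ)_{L²} = (J_{νμ}, ñ_λ)_{L²}` (given the integrability and
integration-by-parts hypotheses expressing decay at infinity). -/
theorem moduli_commutator_identity
    (m : ℕ) (φ : Dom m → ℂ) (𝒜 : Fin 2 → Dom m → ℝ) (χ : Fin m → Dom m → ℝ)
    (hφ : ContDiff ℝ (⊤ : ℕ∞) φ) (h𝒜 : ∀ a, ContDiff ℝ (⊤ : ℕ∞) (𝒜 a))
    (hχ : ∀ μ, ContDiff ℝ (⊤ : ℕ∞) (χ μ)) :
    (∀ (μ ν : Fin m) (p : Dom m),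
        (Dq χ μ (Dq χ ν φ) p - Dq χ ν (Dq χ μ φ) p
          = -(Complex.I * φ p * ((Fqq χ μ ν p : ℝ) : ℂ)))
        ∧ ∀ a : Fin 2, pdq μ (Fxm 𝒜 χ ν a) p - pdq ν (Fxm 𝒜 χ μ a) p
            = -(pdx a (Fqq χ μ ν) p))
      ∧ ∀ q : EuclideanSpace ℝ (Fin m),
        (∀ (lam : Fin m) (x : EuclideanSpace ℝ (Fin 2)),
          (∑ a : Fin 2, pdx a (fun p => Fxm 𝒜 χ lam a p) (x, q))
            = rip (Complex.I * φ (x, q)) (Dq χ lam φ (x, q))) →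
        (∀ μ ν lam : Fin m, Integrable (fun x : EuclideanSpace ℝ (Fin 2) =>
          rip (Dq χ μ (Dq χ ν φ) (x, q)) (Dq χ lam φ (x, q)))) →
        (∀ (μ ν lam : Fin m) (a : Fin 2),
          Integrable (fun x : EuclideanSpace ℝ (Fin 2) =>
            pdq μ (Fxm 𝒜 χ ν a) (x, q) * Fxm 𝒜 χ lam a (x, q))) →
        (∀ μ ν lam : Fin m, Integrable (fun x : EuclideanSpace ℝ (Fin 2) =>
          Fqq χ μ ν (x, q) * rip (Complex.I * φ (x, q)) (Dq χ lam φ (x, q)))) →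
        (∀ μ ν lam : Fin m,
          (∫ x : EuclideanSpace ℝ (Fin 2),
            ∑ a : Fin 2, pdx a (fun p => Fqq χ μ ν p * Fxm 𝒜 χ lam a p) (x, q)) = 0) →
        ∀ μ ν lam : Fin m,
          (∫ x : EuclideanSpace ℝ (Fin 2),
              (rip (Dq χ μ (Dq χ ν φ) (x, q)) (Dq χ lam φ (x, q))
                + ∑ a : Fin 2, pdq μ (Fxm 𝒜 χ ν a) (x, q) * Fxm 𝒜 χ lam a (x, q)))
            = ∫ x : EuclideanSpace ℝ (Fin 2),
                (rip (Dq χ ν (Dq χ μ φ) (x, q)) (Dq χ lam φ (x, q))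
                  + ∑ a : Fin 2, pdq ν (Fxm 𝒜 χ μ a) (x, q) * Fxm 𝒜 χ lam a (x, q)) := by
  constructor
  · intro μ ν p
    exact ⟨part1a hφ hχ μ ν p, fun a => part1b hφ h𝒜 hχ μ ν p a⟩
  · intro q hGauge hI1 hI2 hI3 hIBP μ ν lam
    have hFqq : ContDiff ℝ (⊤ : ℕ∞) (Fqq χ μ ν) :=
      (pdq_contDiff (hχ ν) μ).sub (pdq_contDiff (hχ μ) ν)
    have hFxm : ∀ a, ContDiff ℝ (⊤ : ℕ∞) (Fxm 𝒜 χ lam a) := fun a =>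
      (pdq_contDiff (h𝒜 a) lam).sub (pdx_contDiff (hχ lam) a)
    set A : EuclideanSpace ℝ (Fin 2) → ℝ := fun x =>
      rip (Dq χ μ (Dq χ ν φ) (x, q)) (Dq χ lam φ (x, q))
        + ∑ a : Fin 2, pdq μ (Fxm 𝒜 χ ν a) (x, q) * Fxm 𝒜 χ lam a (x, q) with hA
    set B : EuclideanSpace ℝ (Fin 2) → ℝ := fun x =>
      rip (Dq χ ν (Dq χ μ φ) (x, q)) (Dq χ lam φ (x, q))
        + ∑ a : Fin 2, pdq ν (Fxm 𝒜 χ μ a) (x, q) * Fxm 𝒜 χ lam a (x, q) with hB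
    have hIntA : Integrable A :=
      (hI1 μ ν lam).add (integrable_finset_sum _ (fun a _ => hI2 μ ν lam a))
    have hIntB : Integrable B :=
      (hI1 ν μ lam).add (integrable_finset_sum _ (fun a _ => hI2 ν μ lam a))
    have hpt : ∀ x : EuclideanSpace ℝ (Fin 2), A x - B x
        = -(∑ a : Fin 2, pdx a (fun p => Fqq χ μ ν p * Fxm 𝒜 χ lam a p) (x, q)) := by
      intro x
      have hsum1 : (∑ a : Fin 2, pdx a (fun p => Fqq χ μ ν p * Fxm 𝒜 χ lam a p) (x, q))
          = (∑ a : Fin 2, pdx a (Fqq χ μ ν) (x, q) * Fxm 𝒜 χ lam a (x, q))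
            + Fqq χ μ ν (x, q) * rip (Complex.I * φ (x, q)) (Dq χ lam φ (x, q)) := by
        have hprod : ∀ a : Fin 2, pdx a (fun p => Fqq χ μ ν p * Fxm 𝒜 χ lam a p) (x, q)
            = pdx a (Fqq χ μ ν) (x, q) * Fxm 𝒜 χ lam a (x, q)
              + Fqq χ μ ν (x, q) * pdx a (Fxm 𝒜 χ lam a) (x, q) := fun a =>
          pdx_mul a _ (smooth_diffAt hFqq _) (smooth_diffAt (hFxm a) _)
        have hg : (∑ a : Fin 2, pdx a (Fxm 𝒜 χ lam a) (x, q))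
            = rip (Complex.I * φ (x, q)) (Dq χ lam φ (x, q)) := hGauge lam x
        rw [Finset.sum_congr rfl (fun a _ => hprod a), Finset.sum_add_distrib,
          ← Finset.mul_sum, hg]
      have hrip : rip (Dq χ μ (Dq χ ν φ) (x, q)) (Dq χ lam φ (x, q))
          - rip (Dq χ ν (Dq χ μ φ) (x, q)) (Dq χ lam φ (x, q))
          = -(Fqq χ μ ν (x, q) * rip (Complex.I * φ (x, q)) (Dq χ lam φ (x, q))) := by
        rw [← rip_sub_left, part1a hφ hχ μ ν (x, q), rip_neg_left, rip_mul_ofReal]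
      have hsum2 : (∑ a : Fin 2, pdq μ (Fxm 𝒜 χ ν a) (x, q) * Fxm 𝒜 χ lam a (x, q))
          - (∑ a : Fin 2, pdq ν (Fxm 𝒜 χ μ a) (x, q) * Fxm 𝒜 χ lam a (x, q))
          = -(∑ a : Fin 2, pdx a (Fqq χ μ ν) (x, q) * Fxm 𝒜 χ lam a (x, q)) := by
        rw [← Finset.sum_sub_distrib, ← Finset.sum_neg_distrib]
        refine Finset.sum_congr rfl (fun a _ => ?_)
        rw [← sub_mul, part1b hφ h𝒜 hχ μ ν (x, q) a]
        ring
      rw [hA, hB]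
      simp only []
      rw [hsum1]
      linarith [hrip, hsum2]
    have hzero : (∫ x : EuclideanSpace ℝ (Fin 2), (A x - B x)) = 0 := by
      have : (fun x : EuclideanSpace ℝ (Fin 2) => A x - B x)
          = fun x => -(∑ a : Fin 2, pdx a (fun p => Fqq χ μ ν p * Fxm 𝒜 χ lam a p) (x, q)) :=
        funext hpt
      rw [this, integral_neg, hIBP μ ν lam, neg_zero]
    have := integral_sub hIntA hIntB
    rw [hzero] at this
    linarith [this.symm]
end
end
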